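/- arXiv:2310.17497 — 4 statements merged into one kernel-verified Lean document; each statement's English description precedes it below -/
import Mathlib

section
/- Let f be a real-valued function on pairs of finitely supported integer-valued functions on S that is Lipschitz with constant C_f with respect to the ℓ¹ metric, and assume Σ_k k ν_k < ∞. Then there exists a constant C = C(κ, γ, ν, C_f), for instance C = 2C_f(κ + γ Σ_{k≥0} ν_k |k−1|), such that |L⁽²⁾f(φ,ψ)| ≤ C ‖(φ,ψ)‖₂² for all finitely supported φ, ψ : S → ℕ. -/
set_option maxHeartbeats 2000000

lemma my_int_le_sq (a : ℤ) (h : 0 ≤ a) : (a : ℝ) ≤ (a : ℝ) ^ 2 := by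
  rcases h.lt_or_eq with h1 | h1
  · have : (1 : ℝ) ≤ (a : ℝ) := by exact_mod_cast h1
    nlinarith
  · simp [← h1]

lemma my_abs_tsum_le {ι : Type*} {g b : ι → ℝ} (hb : Summable b) (h : ∀ i, |g i| ≤ b i) :
    |∑' i, g i| ≤ ∑' i, b i := by
  by_cases hg : Summable g
  · refine le_trans ?_ (Summable.tsum_le_tsum h hg.abs hb)
    have h1 : Summable (fun i => ‖g i‖) := by
      simp only [Real.norm_eq_abs]; exact hg.abs
    have h2 := norm_tsum_le_tsum_norm h1
    simp only [Real.norm_eq_abs] at h2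
    exact h2
  · rw [tsum_eq_zero_of_not_summable hg, abs_zero]
    exact tsum_nonneg fun i => (abs_nonneg _).trans (h i)


lemma my_tsum_single {S : Type*} (x : S) (c : ℤ) :
    ∑' i, ((|(Finsupp.single x c : S →₀ ℤ) i| : ℤ) : ℝ) = |(c : ℝ)| := by
  rw [tsum_eq_single x]
  · simp [Finsupp.single_eq_same]
  · intro b hb
    simp [Finsupp.single_eq_of_ne' (Ne.symm hb)]

lemma my_summable_finsupp {S : Type*} (φ : S →₀ ℤ) (F : ℤ → ℝ) (hF : F 0 = 0) :
    Summable (fun x => F (φ x)) := by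
  apply summable_of_ne_finset_zero (s := φ.support)
  intro x hx
  rw [Finsupp.notMem_support_iff.mp hx, hF]
lemma my_key_jump {S : Type*} (f : (S →₀ ℤ) → (S →₀ ℤ) → ℝ) (Cf : ℝ)
    (hf : ∀ φ ψ φ' ψ' : S →₀ ℤ,
      |f φ ψ - f φ' ψ'| ≤
        Cf * ((∑' i, ((|φ i - φ' i| : ℤ) : ℝ)) + ∑' i, ((|ψ i - ψ' i| : ℤ) : ℝ)))
    (x : S) (c : ℤ) (φ ψ : S →₀ ℤ) :
    |f (φ + Finsupp.single x c) ψ - f φ ψ| ≤ |Cf| * |(c : ℝ)| := by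
  have h := hf (φ + Finsupp.single x c) ψ φ ψ
  have e1 : ∑' i, ((|(φ + Finsupp.single x c) i - φ i| : ℤ) : ℝ)
      = ∑' i, ((|(Finsupp.single x c : S →₀ ℤ) i| : ℤ) : ℝ) := by
    refine tsum_congr fun i => ?_
    simp [Finsupp.add_apply]
  have e2 : ∑' i, ((|ψ i - ψ i| : ℤ) : ℝ) = 0 := by simp
  rw [e1, e2, my_tsum_single, add_zero] at h
  refine h.trans ?_
  exact mul_le_mul_of_nonneg_right (le_abs_self Cf) (abs_nonneg _)

lemma my_key_hop {S : Type*} (f : (S →₀ ℤ) → (S →₀ ℤ) → ℝ) (Cf : ℝ)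
    (hf : ∀ φ ψ φ' ψ' : S →₀ ℤ,
      |f φ ψ - f φ' ψ'| ≤
        Cf * ((∑' i, ((|φ i - φ' i| : ℤ) : ℝ)) + ∑' i, ((|ψ i - ψ' i| : ℤ) : ℝ)))
    (x y : S) (φ ψ : S →₀ ℤ) :
    |f (φ + Finsupp.single y 1 - Finsupp.single x 1) ψ - f φ ψ| ≤ |Cf| * 2 := by
  set φ' := φ + Finsupp.single y 1 - Finsupp.single x 1 with hφ'def
  have h := hf φ' ψ φ ψ
  set D := ∑' i, ((|(Finsupp.single y 1 : S →₀ ℤ) i - (Finsupp.single x 1 : S →₀ ℤ) i| : ℤ) : ℝ)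
    with hDdef
  have happ : ∀ i, φ' i - φ i
      = (Finsupp.single y 1 : S →₀ ℤ) i - (Finsupp.single x 1 : S →₀ ℤ) i := by
    intro i
    simp [hφ'def, Finsupp.add_apply, Finsupp.sub_apply]
    ring
  have e1 : ∑' i, ((|φ' i - φ i| : ℤ) : ℝ) = D := tsum_congr fun i => by rw [happ i]
  have e2 : ∑' i, ((|ψ i - ψ i| : ℤ) : ℝ) = 0 := by simp
  rw [e1, e2, add_zero] at h
  have hD0 : 0 ≤ D := tsum_nonneg fun i => by positivity
  have hsy : Summable (fun i => ((|(Finsupp.single y 1 : S →₀ ℤ) i| : ℤ) : ℝ)) :=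
    my_summable_finsupp _ (fun t => ((|t| : ℤ) : ℝ)) (by simp)
  have hsx : Summable (fun i => ((|(Finsupp.single x 1 : S →₀ ℤ) i| : ℤ) : ℝ)) :=
    my_summable_finsupp _ (fun t => ((|t| : ℤ) : ℝ)) (by simp)
  have hg : Summable (fun i => ((|(Finsupp.single y 1 : S →₀ ℤ) i
      - (Finsupp.single x 1 : S →₀ ℤ) i| : ℤ) : ℝ)) := by
    have := my_summable_finsupp (Finsupp.single y 1 - Finsupp.single x 1)
      (fun t => ((|t| : ℤ) : ℝ)) (by simp)
    refine this.congr fun i => ?_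
    simp [Finsupp.sub_apply]
  have hD2 : D ≤ 2 := by
    have hle : ∀ i, ((|(Finsupp.single y 1 : S →₀ ℤ) i - (Finsupp.single x 1 : S →₀ ℤ) i| : ℤ) : ℝ)
        ≤ ((|(Finsupp.single y 1 : S →₀ ℤ) i| : ℤ) : ℝ)
          + ((|(Finsupp.single x 1 : S →₀ ℤ) i| : ℤ) : ℝ) := by
      intro i
      push_cast
      exact abs_sub _ _
    calc D ≤ ∑' i, (((|(Finsupp.single y 1 : S →₀ ℤ) i| : ℤ) : ℝ)
          + ((|(Finsupp.single x 1 : S →₀ ℤ) i| : ℤ) : ℝ)) :=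
        Summable.tsum_le_tsum hle hg (hsy.add hsx)
      _ = 1 + 1 := by rw [Summable.tsum_add hsy hsx, my_tsum_single, my_tsum_single]; norm_num
      _ = 2 := by norm_num
  calc |f φ' ψ - f φ ψ| ≤ Cf * D := h
    _ ≤ |Cf| * D := mul_le_mul_of_nonneg_right (le_abs_self Cf) hD0
    _ ≤ |Cf| * 2 := mul_le_mul_of_nonneg_left hD2 (abs_nonneg _)

/- STATEMENT 2: the full generator `L⁽²⁾` of a Lipschitz function is bounded by a
constant multiple of the squared ℓ²-norm. -/
theorem generator_bound {S : Type*} [Countable S]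
    (κ γ : ℝ) (hκ : 0 < κ) (hγ : 0 < γ)
    (p : S → S → ℝ)
    (hp_nonneg : ∀ x y, 0 ≤ p x y)
    (hp_symm : ∀ x y, p x y = p y x)
    (hp_sum : ∀ x, ∑' y, p x y = 1)
    (ν : ℕ → ℝ) (hν_nonneg : ∀ k, 0 ≤ ν k) (hν_sum : ∑' k, ν k = 1)
    (hν_mean : Summable fun k : ℕ => (k : ℝ) * ν k)
    (f : (S →₀ ℤ) → (S →₀ ℤ) → ℝ) (Cf : ℝ)
    (hf : ∀ φ ψ φ' ψ' : S →₀ ℤ,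
      |f φ ψ - f φ' ψ'| ≤
        Cf * ((∑' i, ((|φ i - φ' i| : ℤ) : ℝ)) + ∑' i, ((|ψ i - ψ' i| : ℤ) : ℝ))) :
    ∃ C : ℝ,
      ∀ φ ψ : S →₀ ℤ, (∀ x, 0 ≤ φ x) → (∀ x, 0 ≤ ψ x) →
        |κ * (∑' q : S × S, (φ q.1 : ℝ) * p q.1 q.2 *
              (f (φ + Finsupp.single q.2 1 - Finsupp.single q.1 1) ψ - f φ ψ))
          + κ * (∑' q : S × S, (ψ q.1 : ℝ) * p q.1 q.2 *
              (f φ (ψ + Finsupp.single q.2 1 - Finsupp.single q.1 1) - f φ ψ))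
          + γ * (∑' x : S, (φ x : ℝ) * (ψ x : ℝ) *
              ∑' k : ℕ, ν k * (f (φ + Finsupp.single x ((k : ℤ) - 1)) ψ - f φ ψ))
          + γ * (∑' x : S, (φ x : ℝ) * (ψ x : ℝ) *
              ∑' k : ℕ, ν k * (f φ (ψ + Finsupp.single x ((k : ℤ) - 1)) - f φ ψ))|
          ≤ C * ∑' i, ((φ i : ℝ) ^ 2 + (ψ i : ℝ) ^ 2) := by
  -- basic summability facts
  have hpS : ∀ x, Summable (fun y => p x y) := by
    intro x
    by_contra h
    have := hp_sum x
    rw [tsum_eq_zero_of_not_summable h] at this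
    norm_num at this
  have hνS : Summable ν := by
    by_contra h
    rw [tsum_eq_zero_of_not_summable h] at hν_sum
    norm_num at hν_sum
  have hνM : Summable (fun k : ℕ => ν k * |(k : ℝ) - 1|) := by
    refine Summable.of_nonneg_of_le
      (fun k => mul_nonneg (hν_nonneg k) (abs_nonneg _)) (fun k => ?_) (hν_mean.add hνS)
    have h1 : |(k : ℝ) - 1| ≤ (k : ℝ) + 1 := by
      have h0 : (0:ℝ) ≤ (k : ℝ) := Nat.cast_nonneg k
      have := abs_sub (k : ℝ) 1
      simpa [abs_of_nonneg h0] using this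
    have h2 : (0 : ℝ) ≤ ν k := hν_nonneg k
    nlinarith
  set M := ∑' k : ℕ, ν k * |(k : ℝ) - 1| with hMdef
  have hM0 : 0 ≤ M := tsum_nonneg fun k => mul_nonneg (hν_nonneg k) (abs_nonneg _)
  -- the swapped function
  have hfswap : ∀ φ ψ φ' ψ' : S →₀ ℤ,
      |(fun a b => f b a) φ ψ - (fun a b => f b a) φ' ψ'| ≤
        Cf * ((∑' i, ((|φ i - φ' i| : ℤ) : ℝ)) + ∑' i, ((|ψ i - ψ' i| : ℤ) : ℝ)) := by
    intro a b a' b'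
    have h := hf b a b' a'
    calc |(fun a b => f b a) a b - (fun a b => f b a) a' b'| = |f b a - f b' a'| := rfl
      _ ≤ Cf * ((∑' i, ((|b i - b' i| : ℤ) : ℝ)) + ∑' i, ((|a i - a' i| : ℤ) : ℝ)) := h
      _ = Cf * ((∑' i, ((|a i - a' i| : ℤ) : ℝ)) + ∑' i, ((|b i - b' i| : ℤ) : ℝ)) := by ring
  refine ⟨4 * κ * |Cf| + 2 * γ * |Cf| * M, ?_⟩
  intro φ ψ hφ hψ
  have hφ0 : ∀ x, (0 : ℝ) ≤ (φ x : ℝ) := fun x => by exact_mod_cast hφ x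
  have hψ0 : ∀ x, (0 : ℝ) ≤ (ψ x : ℝ) := fun x => by exact_mod_cast hψ x
  have sφ : Summable (fun x => (φ x : ℝ)) := my_summable_finsupp φ (fun t => (t : ℝ)) (by simp)
  have sψ : Summable (fun x => (ψ x : ℝ)) := my_summable_finsupp ψ (fun t => (t : ℝ)) (by simp)
  have sN : Summable (fun x => (φ x : ℝ) ^ 2 + (ψ x : ℝ) ^ 2) :=
    (my_summable_finsupp φ (fun t => (t : ℝ) ^ 2) (by simp)).add
      (my_summable_finsupp ψ (fun t => (t : ℝ) ^ 2) (by simp))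
  have hptN : ∀ x, (φ x : ℝ) * (ψ x : ℝ) ≤ (φ x : ℝ) ^ 2 + (ψ x : ℝ) ^ 2 := by
    intro x
    nlinarith [sq_nonneg ((φ x : ℝ) - (ψ x : ℝ))]
  have sφψ : Summable (fun x => (φ x : ℝ) * (ψ x : ℝ)) :=
    Summable.of_nonneg_of_le (fun x => mul_nonneg (hφ0 x) (hψ0 x)) hptN sN
  set N := ∑' i, ((φ i : ℝ) ^ 2 + (ψ i : ℝ) ^ 2) with hNdef
  have hN0 : 0 ≤ N := tsum_nonneg fun i => by positivity
  have hφN : ∑' x, (φ x : ℝ) ≤ N := by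
    refine Summable.tsum_le_tsum (fun x => ?_) sφ sN
    have := my_int_le_sq (φ x) (hφ x)
    nlinarith [sq_nonneg ((ψ x : ℝ))]
  have hψN : ∑' x, (ψ x : ℝ) ≤ N := by
    refine Summable.tsum_le_tsum (fun x => ?_) sψ sN
    have := my_int_le_sq (ψ x) (hψ x)
    nlinarith [sq_nonneg ((φ x : ℝ))]
  have hφψN : ∑' x, (φ x : ℝ) * (ψ x : ℝ) ≤ N := Summable.tsum_le_tsum hptN sφψ sN
  -- Term 1
  have sb1 : Summable (fun q : S × S => (2 * |Cf| * (φ q.1 : ℝ)) * p q.1 q.2) := by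
    refine (summable_prod_of_nonneg (fun q => ?_)).mpr
      ⟨fun x => (hpS x).mul_left (2 * |Cf| * (φ x : ℝ)), ?_⟩
    · exact mul_nonneg (mul_nonneg (by positivity) (hφ0 _)) (hp_nonneg _ _)
    · refine (sφ.mul_left (2 * |Cf|)).congr fun x => ?_
      dsimp only
      rw [tsum_mul_left, hp_sum x, mul_one]
  have h1 : |∑' q : S × S, (φ q.1 : ℝ) * p q.1 q.2 *
        (f (φ + Finsupp.single q.2 1 - Finsupp.single q.1 1) ψ - f φ ψ)|
      ≤ 2 * |Cf| * N := by
    have hpt : ∀ q : S × S, |(φ q.1 : ℝ) * p q.1 q.2 *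
        (f (φ + Finsupp.single q.2 1 - Finsupp.single q.1 1) ψ - f φ ψ)|
        ≤ (2 * |Cf| * (φ q.1 : ℝ)) * p q.1 q.2 := by
      intro q
      rw [abs_mul, abs_mul, abs_of_nonneg (hφ0 _), abs_of_nonneg (hp_nonneg _ _)]
      calc (φ q.1 : ℝ) * p q.1 q.2 *
            |f (φ + Finsupp.single q.2 1 - Finsupp.single q.1 1) ψ - f φ ψ|
          ≤ (φ q.1 : ℝ) * p q.1 q.2 * (|Cf| * 2) := by
            exact mul_le_mul_of_nonneg_left (my_key_hop f Cf hf q.1 q.2 φ ψ)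
              (mul_nonneg (hφ0 _) (hp_nonneg _ _))
        _ = (2 * |Cf| * (φ q.1 : ℝ)) * p q.1 q.2 := by ring
    refine (my_abs_tsum_le sb1 hpt).trans ?_
    have t1 : ∑' q : S × S, (2 * |Cf| * (φ q.1 : ℝ)) * p q.1 q.2
          = 2 * |Cf| * ∑' x, (φ x : ℝ) := by
        rw [Summable.tsum_prod' sb1 (fun x => (hpS x).mul_left (2 * |Cf| * (φ x : ℝ)))]
        rw [← tsum_mul_left]
        refine tsum_congr fun x => ?_
        dsimp only
        rw [tsum_mul_left, hp_sum x, mul_one]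
    rw [t1]
    exact mul_le_mul_of_nonneg_left hφN (by positivity)
  -- Term 2
  have sb2 : Summable (fun q : S × S => (2 * |Cf| * (ψ q.1 : ℝ)) * p q.1 q.2) := by
    refine (summable_prod_of_nonneg (fun q => ?_)).mpr
      ⟨fun x => (hpS x).mul_left (2 * |Cf| * (ψ x : ℝ)), ?_⟩
    · exact mul_nonneg (mul_nonneg (by positivity) (hψ0 _)) (hp_nonneg _ _)
    · refine (sψ.mul_left (2 * |Cf|)).congr fun x => ?_
      dsimp only
      rw [tsum_mul_left, hp_sum x, mul_one]
  have h2 : |∑' q : S × S, (ψ q.1 : ℝ) * p q.1 q.2 *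
        (f φ (ψ + Finsupp.single q.2 1 - Finsupp.single q.1 1) - f φ ψ)|
      ≤ 2 * |Cf| * N := by
    have hpt : ∀ q : S × S, |(ψ q.1 : ℝ) * p q.1 q.2 *
        (f φ (ψ + Finsupp.single q.2 1 - Finsupp.single q.1 1) - f φ ψ)|
        ≤ (2 * |Cf| * (ψ q.1 : ℝ)) * p q.1 q.2 := by
      intro q
      rw [abs_mul, abs_mul, abs_of_nonneg (hψ0 _), abs_of_nonneg (hp_nonneg _ _)]
      calc (ψ q.1 : ℝ) * p q.1 q.2 *
            |f φ (ψ + Finsupp.single q.2 1 - Finsupp.single q.1 1) - f φ ψ|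
          ≤ (ψ q.1 : ℝ) * p q.1 q.2 * (|Cf| * 2) := by
            exact mul_le_mul_of_nonneg_left
              (my_key_hop (fun a b => f b a) Cf hfswap q.1 q.2 ψ φ)
              (mul_nonneg (hψ0 _) (hp_nonneg _ _))
        _ = (2 * |Cf| * (ψ q.1 : ℝ)) * p q.1 q.2 := by ring
    refine (my_abs_tsum_le sb2 hpt).trans ?_
    have t2 : ∑' q : S × S, (2 * |Cf| * (ψ q.1 : ℝ)) * p q.1 q.2
          = 2 * |Cf| * ∑' x, (ψ x : ℝ) := by
        rw [Summable.tsum_prod' sb2 (fun x => (hpS x).mul_left (2 * |Cf| * (ψ x : ℝ)))]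
        rw [← tsum_mul_left]
        refine tsum_congr fun x => ?_
        dsimp only
        rw [tsum_mul_left, hp_sum x, mul_one]
    rw [t2]
    exact mul_le_mul_of_nonneg_left hψN (by positivity)
  -- inner jump sums
  have hI1 : ∀ x : S,
      |∑' k : ℕ, ν k * (f (φ + Finsupp.single x ((k : ℤ) - 1)) ψ - f φ ψ)| ≤ |Cf| * M := by
    intro x
    have hpt : ∀ k : ℕ, |ν k * (f (φ + Finsupp.single x ((k : ℤ) - 1)) ψ - f φ ψ)|
        ≤ |Cf| * (ν k * |(k : ℝ) - 1|) := by
      intro k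
      rw [abs_mul, abs_of_nonneg (hν_nonneg k)]
      have hkey := my_key_jump f Cf hf x ((k : ℤ) - 1) φ ψ
      have hcast : |(((k : ℤ) - 1 : ℤ) : ℝ)| = |(k : ℝ) - 1| := by push_cast; ring_nf
      rw [hcast] at hkey
      calc ν k * |f (φ + Finsupp.single x ((k : ℤ) - 1)) ψ - f φ ψ|
          ≤ ν k * (|Cf| * |(k : ℝ) - 1|) :=
            mul_le_mul_of_nonneg_left hkey (hν_nonneg k)
        _ = |Cf| * (ν k * |(k : ℝ) - 1|) := by ring
    refine (my_abs_tsum_le (hνM.mul_left |Cf|) hpt).trans ?_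
    rw [tsum_mul_left]
  have hI2 : ∀ x : S,
      |∑' k : ℕ, ν k * (f φ (ψ + Finsupp.single x ((k : ℤ) - 1)) - f φ ψ)| ≤ |Cf| * M := by
    intro x
    have hpt : ∀ k : ℕ, |ν k * (f φ (ψ + Finsupp.single x ((k : ℤ) - 1)) - f φ ψ)|
        ≤ |Cf| * (ν k * |(k : ℝ) - 1|) := by
      intro k
      rw [abs_mul, abs_of_nonneg (hν_nonneg k)]
      have hkey := my_key_jump (fun a b => f b a) Cf hfswap x ((k : ℤ) - 1) ψ φ
      have hcast : |(((k : ℤ) - 1 : ℤ) : ℝ)| = |(k : ℝ) - 1| := by push_cast; ring_nf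
      rw [hcast] at hkey
      calc ν k * |f φ (ψ + Finsupp.single x ((k : ℤ) - 1)) - f φ ψ|
          ≤ ν k * (|Cf| * |(k : ℝ) - 1|) :=
            mul_le_mul_of_nonneg_left hkey (hν_nonneg k)
        _ = |Cf| * (ν k * |(k : ℝ) - 1|) := by ring
    refine (my_abs_tsum_le (hνM.mul_left |Cf|) hpt).trans ?_
    rw [tsum_mul_left]
  -- Term 3
  have h3 : |∑' x : S, (φ x : ℝ) * (ψ x : ℝ) *
        ∑' k : ℕ, ν k * (f (φ + Finsupp.single x ((k : ℤ) - 1)) ψ - f φ ψ)|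
      ≤ |Cf| * M * N := by
    have hpt : ∀ x : S, |(φ x : ℝ) * (ψ x : ℝ) *
        ∑' k : ℕ, ν k * (f (φ + Finsupp.single x ((k : ℤ) - 1)) ψ - f φ ψ)|
        ≤ (φ x : ℝ) * (ψ x : ℝ) * (|Cf| * M) := by
      intro x
      rw [abs_mul, abs_of_nonneg (mul_nonneg (hφ0 x) (hψ0 x))]
      exact mul_le_mul_of_nonneg_left (hI1 x) (mul_nonneg (hφ0 x) (hψ0 x))
    refine (my_abs_tsum_le (sφψ.mul_right (|Cf| * M)) hpt).trans ?_
    rw [tsum_mul_right]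
    calc (∑' x, (φ x : ℝ) * (ψ x : ℝ)) * (|Cf| * M) ≤ N * (|Cf| * M) :=
        mul_le_mul_of_nonneg_right hφψN (by positivity)
      _ = |Cf| * M * N := by ring
  -- Term 4
  have h4 : |∑' x : S, (φ x : ℝ) * (ψ x : ℝ) *
        ∑' k : ℕ, ν k * (f φ (ψ + Finsupp.single x ((k : ℤ) - 1)) - f φ ψ)|
      ≤ |Cf| * M * N := by
    have hpt : ∀ x : S, |(φ x : ℝ) * (ψ x : ℝ) *
        ∑' k : ℕ, ν k * (f φ (ψ + Finsupp.single x ((k : ℤ) - 1)) - f φ ψ)|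
        ≤ (φ x : ℝ) * (ψ x : ℝ) * (|Cf| * M) := by
      intro x
      rw [abs_mul, abs_of_nonneg (mul_nonneg (hφ0 x) (hψ0 x))]
      exact mul_le_mul_of_nonneg_left (hI2 x) (mul_nonneg (hφ0 x) (hψ0 x))
    refine (my_abs_tsum_le (sφψ.mul_right (|Cf| * M)) hpt).trans ?_
    rw [tsum_mul_right]
    calc (∑' x, (φ x : ℝ) * (ψ x : ℝ)) * (|Cf| * M) ≤ N * (|Cf| * M) :=
        mul_le_mul_of_nonneg_right hφψN (by positivity)
      _ = |Cf| * M * N := by ring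
  -- assemble
  set A := ∑' q : S × S, (φ q.1 : ℝ) * p q.1 q.2 *
      (f (φ + Finsupp.single q.2 1 - Finsupp.single q.1 1) ψ - f φ ψ) with hA
  set B := ∑' q : S × S, (ψ q.1 : ℝ) * p q.1 q.2 *
      (f φ (ψ + Finsupp.single q.2 1 - Finsupp.single q.1 1) - f φ ψ) with hB
  set C3 := ∑' x : S, (φ x : ℝ) * (ψ x : ℝ) *
      ∑' k : ℕ, ν k * (f (φ + Finsupp.single x ((k : ℤ) - 1)) ψ - f φ ψ) with hC3
  set D4 := ∑' x : S, (φ x : ℝ) * (ψ x : ℝ) *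
      ∑' k : ℕ, ν k * (f φ (ψ + Finsupp.single x ((k : ℤ) - 1)) - f φ ψ) with hD4
  have habs : |κ * A + κ * B + γ * C3 + γ * D4|
      ≤ κ * |A| + κ * |B| + γ * |C3| + γ * |D4| := by
    calc |κ * A + κ * B + γ * C3 + γ * D4|
        ≤ |κ * A + κ * B + γ * C3| + |γ * D4| := abs_add_le _ _
      _ ≤ (|κ * A| + |κ * B| + |γ * C3|) + |γ * D4| :=
          add_le_add_left (abs_add_three _ _ _) _
      _ = κ * |A| + κ * |B| + γ * |C3| + γ * |D4| := by
          rw [abs_mul, abs_mul, abs_mul, abs_mul, abs_of_pos hκ, abs_of_pos hγ]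
  refine habs.trans ?_
  have e1 := mul_le_mul_of_nonneg_left h1 hκ.le
  have e2 := mul_le_mul_of_nonneg_left h2 hκ.le
  have e3 := mul_le_mul_of_nonneg_left h3 hγ.le
  have e4 := mul_le_mul_of_nonneg_left h4 hγ.le
  nlinarith [e1, e2, e3, e4]
end

section
/- Let m ≥ 1 be an integer, assume the branching law ν is critical (Σ_{k≥0} k ν_k = 1) and has finite m-th moment (Σ_{k≥0} k^m ν_k < ∞). Then for all finitely supported φ, ψ : S → ℕ one has |L⁽²⁾h_m(φ,ψ)| ≤ (5 κ c_m + c'_m) h_m(φ,ψ), where c_m = 2^m − 1 and c'_m = 3 γ Σ_{j=2}^{m} binom(m,j) Σ_{k≥0} ν_k |k−1|^j. -/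
open Finset in
lemma aux_pow_sub_le (m : ℕ) (b : ℝ) (hb : 0 ≤ b) :
    (b + 1) ^ m - b ^ m ≤ ((2:ℝ) ^ m - 1) * (b ^ (m - 1) + 1) := by
  have hexp : (b + 1) ^ m = (∑ j ∈ range m, b ^ j * (m.choose j : ℝ)) + b ^ m := by
    rw [add_pow]
    simp [Finset.sum_range_succ]
  have hbj : ∀ j ∈ range m, b ^ j * (m.choose j : ℝ) ≤ (b ^ (m-1) + 1) * (m.choose j : ℝ) := by
    intro j hj
    have hj' : j ≤ m - 1 := by have := Finset.mem_range.mp hj; omega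
    have : b ^ j ≤ b ^ (m-1) + 1 := by
      rcases le_total b 1 with h | h
      · have : b ^ j ≤ 1 := pow_le_one₀ hb h
        nlinarith [pow_nonneg hb (m-1)]
      · have : b ^ j ≤ b ^ (m-1) := pow_le_pow_right₀ h hj'
        linarith
    exact mul_le_mul_of_nonneg_right this (Nat.cast_nonneg _)
  have hsum : ∑ j ∈ range m, b ^ j * (m.choose j : ℝ) ≤
      (b ^ (m-1) + 1) * ∑ j ∈ range m, (m.choose j : ℝ) := by
    rw [Finset.mul_sum]; exact Finset.sum_le_sum hbj
  have hchoose : ∑ j ∈ range m, (m.choose j : ℝ) = 2 ^ m - 1 := by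
    have h1 : ∑ j ∈ range (m+1), (m.choose j : ℝ) = 2 ^ m := by
      rw [← Nat.cast_sum]; rw [Nat.sum_range_choose]; push_cast; ring
    rw [Finset.sum_range_succ] at h1
    simp at h1 ⊢
    linarith
  nlinarith [pow_nonneg hb (m-1)]

lemma aux_young (m : ℕ) (hm1 : 1 ≤ m) (x y : ℝ) (hx : 0 ≤ x) (hy : 0 ≤ y) :
    x ^ (m-1) * y ≤ x ^ m + y ^ m := by
  rcases le_total y x with h | h
  · have : x ^ (m-1) * y ≤ x ^ (m-1) * x := mul_le_mul_of_nonneg_left h (pow_nonneg hx _)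
    have hx2 : x ^ (m-1) * x = x ^ m := by
      rw [← pow_succ]; congr 1; omega
    nlinarith [pow_nonneg hy m]
  · have : x ^ (m-1) * y ≤ y ^ (m-1) * y := by
      have := pow_le_pow_left₀ hx h (m-1)
      exact mul_le_mul_of_nonneg_right this hy
    have hy2 : y ^ (m-1) * y = y ^ m := by
      rw [← pow_succ]; congr 1; omega
    nlinarith [pow_nonneg hx m]

lemma aux_abs_tsum_le {I : Type*} (f : I → ℝ) (h : Summable fun i => |f i|) :
    |∑' i, f i| ≤ ∑' i, |f i| := by
  have h' : Summable fun i => ‖f i‖ := by simpa only [Real.norm_eq_abs] using h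
  have := norm_tsum_le_tsum_norm h'
  simpa only [Real.norm_eq_abs] using this

lemma aux_mig_pointwise (m : ℕ) (hm1 : 1 ≤ m) (a b : ℝ) (ha : 1 ≤ a) (hb : 0 ≤ b) :
    a * |((a - 1) ^ m - a ^ m) + ((b + 1) ^ m - b ^ m)| ≤
      ((2:ℝ) ^ m - 1) * (4 * a ^ m + b ^ m) := by
  set C := (2:ℝ) ^ m - 1 with hC
  have hC0 : (0:ℝ) ≤ C := by
    have : (2:ℝ) ^ 1 ≤ 2 ^ m := pow_le_pow_right₀ one_le_two hm1
    simp only [pow_one] at this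
    simp only [hC]; linarith
  have ha0 : (0:ℝ) ≤ a := by linarith
  have h1 : a ^ m - (a - 1) ^ m ≤ C * (a ^ (m-1) + 1) := by
    have h := aux_pow_sub_le m (a - 1) (by linarith)
    rw [show a - 1 + 1 = a from by ring] at h
    have h2 : (a - 1) ^ (m-1) ≤ a ^ (m-1) := pow_le_pow_left₀ (by linarith) (by linarith) _
    have h3 : C * ((a - 1) ^ (m-1) + 1) ≤ C * (a ^ (m-1) + 1) :=
      mul_le_mul_of_nonneg_left (by linarith) hC0
    calc a ^ m - (a - 1) ^ m ≤ C * ((a - 1) ^ (m-1) + 1) := by rw [hC]; exact h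
      _ ≤ C * (a ^ (m-1) + 1) := h3
  have h2 : (b + 1) ^ m - b ^ m ≤ C * (b ^ (m-1) + 1) := aux_pow_sub_le m b hb
  have h3 : (0:ℝ) ≤ a ^ m - (a - 1) ^ m := by
    have := pow_le_pow_left₀ (show (0:ℝ) ≤ a - 1 from by linarith) (show a - 1 ≤ a from by linarith) m
    linarith
  have h4 : (0:ℝ) ≤ (b + 1) ^ m - b ^ m := by
    have := pow_le_pow_left₀ hb (show b ≤ b + 1 from by linarith) m
    linarith
  have habs : |((a - 1) ^ m - a ^ m) + ((b + 1) ^ m - b ^ m)| ≤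
      (a ^ m - (a - 1) ^ m) + ((b + 1) ^ m - b ^ m) := by
    have := abs_add_le ((a - 1) ^ m - a ^ m) ((b + 1) ^ m - b ^ m)
    rw [abs_of_nonpos (show (a - 1) ^ m - a ^ m ≤ 0 from by linarith), abs_of_nonneg h4] at this
    linarith
  have hstep : a * |((a - 1) ^ m - a ^ m) + ((b + 1) ^ m - b ^ m)| ≤
      a * (C * (a ^ (m-1) + 1) + C * (b ^ (m-1) + 1)) := by
    apply mul_le_mul_of_nonneg_left _ ha0
    linarith
  have e1 : a * a ^ (m-1) = a ^ m := by
    rw [← pow_succ']; congr 1; omega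
  have e2 : a ≤ a ^ m := le_self_pow₀ ha (by omega)
  have e3 : b ^ (m-1) * a ≤ b ^ m + a ^ m := aux_young m hm1 b a hb ha0
  have expand : a * (C * (a ^ (m-1) + 1) + C * (b ^ (m-1) + 1))
      = C * ((a * a ^ (m-1)) + (b ^ (m-1) * a) + 2 * a) := by ring
  rw [expand, e1] at hstep
  have hfin : a ^ m + b ^ (m-1) * a + 2 * a ≤ 4 * a ^ m + b ^ m := by linarith
  calc a * |((a - 1) ^ m - a ^ m) + ((b + 1) ^ m - b ^ m)|
      ≤ C * (a ^ m + b ^ (m-1) * a + 2 * a) := hstep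
    _ ≤ C * (4 * a ^ m + b ^ m) := mul_le_mul_of_nonneg_left hfin hC0

lemma aux_expand (m : ℕ) (a t : ℝ) :
    (a + t) ^ m - a ^ m = ∑ j ∈ Finset.Icc 1 m, t ^ j * a ^ (m - j) * (m.choose j : ℝ) := by
  have h := add_pow t a m
  have hr : Finset.range (m+1) = insert 0 (Finset.Icc 1 m) := by
    ext j
    simp only [Finset.mem_range, Finset.mem_insert, Finset.mem_Icc]
    omega
  rw [hr, Finset.sum_insert (by simp)] at h
  have h0 : t ^ 0 * a ^ (m - 0) * (m.choose 0 : ℝ) = a ^ m := by simp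
  rw [h0] at h
  rw [show a + t = t + a from add_comm a t, h]
  ring

lemma aux_abs_pow (m j k : ℕ) (hm0 : m ≠ 0) (hj : j ≤ m) :
    |(k:ℝ) - 1| ^ j ≤ (k:ℝ) ^ m + 1 := by
  rcases Nat.eq_zero_or_pos k with hk | hk
  · subst hk
    rw [Nat.cast_zero, zero_pow hm0]
    norm_num
  · have hk1 : (1:ℝ) ≤ (k:ℝ) := by exact_mod_cast hk
    have habs : |(k:ℝ) - 1| = (k:ℝ) - 1 := abs_of_nonneg (by linarith)
    rw [habs]
    have h1 : ((k:ℝ) - 1) ^ j ≤ (k:ℝ) ^ j := pow_le_pow_left₀ (by linarith) (by linarith) j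
    have h2 : (k:ℝ) ^ j ≤ (k:ℝ) ^ m := pow_le_pow_right₀ hk1 hj
    linarith

lemma aux_F_summable {S : Type*} (m : ℕ) (hm1 : 1 ≤ m) (g : S →₀ ℤ) :
    Summable (fun z => ((|g z| : ℤ) : ℝ) ^ m) := by
  apply summable_of_ne_finset_zero (s := g.support)
  intro z hz
  have : g z = 0 := Finsupp.notMem_support_iff.mp hz
  simp [this, zero_pow (by omega : m ≠ 0)]

lemma aux_F_diff {S : Type*} (m : ℕ) (hm1 : 1 ≤ m) (g η : S →₀ ℤ)
    (T : Finset S) (hT : η.support ⊆ T) :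
    (∑' z, ((|(g + η) z| : ℤ) : ℝ) ^ m) - ∑' z, ((|g z| : ℤ) : ℝ) ^ m
      = ∑ z ∈ T, (((|(g + η) z| : ℤ) : ℝ) ^ m - ((|g z| : ℤ) : ℝ) ^ m) := by
  rw [← Summable.tsum_sub (aux_F_summable m hm1 (g + η)) (aux_F_summable m hm1 g)]
  apply tsum_eq_sum
  intro z hz
  have hηz : η z = 0 := by
    by_contra h
    exact hz (hT (Finsupp.mem_support_iff.mpr h))
  simp [Finsupp.add_apply, hηz]

lemma aux_summable_mul_p {S : Type*} (p : S → S → ℝ) (hp_nonneg : ∀ x y, 0 ≤ p x y)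
    (hps : ∀ x, Summable (p x)) (hp_sum : ∀ x, ∑' y, p x y = 1)
    (h : S → ℝ) (hh : ∀ x, 0 ≤ h x) (hhs : Summable h) :
    Summable (fun q : S × S => h q.1 * p q.1 q.2) ∧
    (∑' q : S × S, h q.1 * p q.1 q.2) = ∑' x, h x := by
  have hnn : ∀ q : S × S, 0 ≤ h q.1 * p q.1 q.2 :=
    fun q => mul_nonneg (hh _) (hp_nonneg _ _)
  have hfib : ∀ x, Summable fun y => h x * p x y := fun x => (hps x).mul_left _
  have hsums : Summable fun x => ∑' y, h x * p x y := by
    have : (fun x => ∑' y, h x * p x y) = h := by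
      funext x
      rw [tsum_mul_left, hp_sum x, mul_one]
    rw [this]; exact hhs
  have hsummable : Summable (fun q : S × S => h q.1 * p q.1 q.2) := by
    rw [summable_prod_of_nonneg hnn]
    exact ⟨hfib, hsums⟩
  refine ⟨hsummable, ?_⟩
  rw [Summable.tsum_prod' hsummable hfib]
  apply tsum_congr
  intro x
  rw [show (fun c => h (x, c).1 * p (x, c).1 (x, c).2) = fun c => h x * p x c from rfl,
    tsum_mul_left, hp_sum x, mul_one]

/- STATEMENT 3 -/
theorem generator_bound_hm {S : Type*} [Countable S]
    (κ γ : ℝ) (hκ : 0 < κ) (hγ : 0 < γ)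
    (p : S → S → ℝ)
    (hp_nonneg : ∀ x y, 0 ≤ p x y)
    (hp_symm : ∀ x y, p x y = p y x)
    (hp_sum : ∀ x, ∑' y, p x y = 1)
    (ν : ℕ → ℝ) (hν_nonneg : ∀ k, 0 ≤ ν k) (hν_sum : ∑' k, ν k = 1)
    (m : ℕ) (hm1 : 1 ≤ m)
    (hν_critical : Summable (fun k : ℕ => (k : ℝ) * ν k) ∧ ∑' k : ℕ, (k : ℝ) * ν k = 1)
    (hν_moment : Summable fun k : ℕ => (k : ℝ) ^ m * ν k)
    (hm : (S →₀ ℤ) → (S →₀ ℤ) → ℝ)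
    (hhm : ∀ φ ψ : S →₀ ℤ,
      hm φ ψ = ∑' x : S, (((|φ x| : ℤ) : ℝ) ^ m + ((|ψ x| : ℤ) : ℝ) ^ m))
    (φ ψ : S →₀ ℤ) (hφ : ∀ x, 0 ≤ φ x) (hψ : ∀ x, 0 ≤ ψ x) :
    |κ * (∑' q : S × S, (φ q.1 : ℝ) * p q.1 q.2 *
          (hm (φ + Finsupp.single q.2 1 - Finsupp.single q.1 1) ψ - hm φ ψ))
      + κ * (∑' q : S × S, (ψ q.1 : ℝ) * p q.1 q.2 *
          (hm φ (ψ + Finsupp.single q.2 1 - Finsupp.single q.1 1) - hm φ ψ))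
      + γ * (∑' x : S, (φ x : ℝ) * (ψ x : ℝ) *
          ∑' k : ℕ, ν k * (hm (φ + Finsupp.single x ((k : ℤ) - 1)) ψ - hm φ ψ))
      + γ * (∑' x : S, (φ x : ℝ) * (ψ x : ℝ) *
          ∑' k : ℕ, ν k * (hm φ (ψ + Finsupp.single x ((k : ℤ) - 1)) - hm φ ψ))|
      ≤ (5 * κ * ((2 : ℝ) ^ m - 1)
          + 3 * γ * ∑ j ∈ Finset.Icc 2 m,
              (m.choose j : ℝ) * ∑' k : ℕ, ν k * |(k : ℝ) - 1| ^ j)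
        * hm φ ψ := by
  classical
  have hm0 : m ≠ 0 := by omega
  have hC0 : (0:ℝ) ≤ (2:ℝ) ^ m - 1 := by
    have : (2:ℝ) ^ 1 ≤ 2 ^ m := pow_le_pow_right₀ one_le_two hm1
    simp only [pow_one] at this
    linarith
  have hνs : Summable ν := by
    by_contra h
    rw [tsum_eq_zero_of_not_summable h] at hν_sum
    norm_num at hν_sum
  have hps : ∀ x, Summable (p x) := by
    intro x
    by_contra h
    have h2 := hp_sum x
    rw [tsum_eq_zero_of_not_summable h] at h2
    norm_num at h2
  set F : (S →₀ ℤ) → ℝ := fun g => ∑' z, ((|g z| : ℤ) : ℝ) ^ m with hFdef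
  have hFs : ∀ g : S →₀ ℤ, Summable (fun z => ((|g z| : ℤ) : ℝ) ^ m) :=
    fun g => aux_F_summable m hm1 g
  have hmF : ∀ g h : S →₀ ℤ, hm g h = F g + F h := by
    intro g h
    rw [hhm g h]
    exact Summable.tsum_add (hFs g) (hFs h)
  have hF0 : ∀ g, 0 ≤ F g := fun g => tsum_nonneg (fun z => by positivity)
  -- summability of k ↦ ν k * ((k:ℝ)-1)^j for j ≤ m
  have hsum_j : ∀ j, j ≤ m → Summable (fun k : ℕ => ν k * ((k:ℝ) - 1) ^ j) := by
    intro j hj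
    have hRHS : Summable (fun k : ℕ => ν k * ((k:ℝ) ^ m + 1)) := by
      have : (fun k : ℕ => ν k * ((k:ℝ) ^ m + 1)) = fun k : ℕ => (k:ℝ) ^ m * ν k + ν k := by
        funext k; ring
      rw [this]
      exact hν_moment.add hνs
    have habs : ∀ k : ℕ, |ν k * ((k:ℝ) - 1) ^ j| ≤ ν k * ((k:ℝ) ^ m + 1) := by
      intro k
      rw [abs_mul, abs_of_nonneg (hν_nonneg k), abs_pow]
      exact mul_le_mul_of_nonneg_left (aux_abs_pow m j k hm0 hj) (hν_nonneg k)
    exact Summable.of_abs (Summable.of_nonneg_of_le (fun k => abs_nonneg _) habs hRHS)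
  have habs_j : ∀ j, j ≤ m → Summable (fun k : ℕ => ν k * |(k:ℝ) - 1| ^ j) := by
    intro j hj
    refine ((hsum_j j hj).abs).congr fun k => ?_
    rw [abs_mul, abs_of_nonneg (hν_nonneg k), abs_pow]
  have hμ1 : (∑' k : ℕ, ν k * ((k:ℝ) - 1)) = 0 := by
    have he : (fun k : ℕ => ν k * ((k:ℝ) - 1)) = fun k : ℕ => (k:ℝ) * ν k - ν k := by
      funext k; ring
    rw [he, Summable.tsum_sub hν_critical.1 hνs, hν_critical.2, hν_sum]
    ring
  -- abstract the constant
  set Bm : ℝ := ∑ j ∈ Finset.Icc 2 m,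
      (m.choose j : ℝ) * ∑' k : ℕ, ν k * |(k : ℝ) - 1| ^ j with hBdef
  have hBm0 : 0 ≤ Bm := by
    apply Finset.sum_nonneg
    intro j hj
    apply mul_nonneg (Nat.cast_nonneg _)
    exact tsum_nonneg (fun k => mul_nonneg (hν_nonneg k) (by positivity))
  -- ====================== migration bound ======================
  have mig : ∀ (χ : S →₀ ℤ), (∀ x, (0:ℤ) ≤ χ x) →
      |∑' q : S × S, ((χ q.1 : ℤ) : ℝ) * p q.1 q.2 *
        (F (χ + Finsupp.single q.2 1 - Finsupp.single q.1 1) - F χ)| ≤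
      5 * ((2:ℝ) ^ m - 1) * F χ := by
    intro χ hχ
    have hc0 : ∀ x, (0:ℝ) ≤ ((χ x : ℤ) : ℝ) := fun x => by exact_mod_cast hχ x
    have hcc : ∀ x, ((|χ x| : ℤ) : ℝ) = ((χ x : ℤ) : ℝ) := fun x => by
      rw [abs_of_nonneg (hχ x)]
    have hsum_cm : Summable (fun x => ((χ x : ℤ) : ℝ) ^ m) := by
      refine (hFs χ).congr fun x => ?_
      rw [hcc x]
    have hFχ : F χ = ∑' x, ((χ x : ℤ) : ℝ) ^ m := by
      simp only [hFdef]
      exact tsum_congr fun x => by rw [hcc x]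
    have hw := aux_summable_mul_p p hp_nonneg hps hp_sum (fun x => ((χ x : ℤ) : ℝ) ^ m)
      (fun x => pow_nonneg (hc0 x) m) hsum_cm
    have hswap : (fun q : S × S => ((χ q.2 : ℤ) : ℝ) ^ m * p q.1 q.2)
        = (fun q : S × S => ((χ q.1 : ℤ) : ℝ) ^ m * p q.1 q.2) ∘ (Equiv.prodComm S S) := by
      funext q
      simp only [Function.comp_apply, Equiv.prodComm_apply, Prod.fst_swap, Prod.snd_swap]
      rw [hp_symm q.1 q.2]
    have hw2s : Summable (fun q : S × S => ((χ q.2 : ℤ) : ℝ) ^ m * p q.1 q.2) := by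
      rw [hswap, Equiv.summable_iff]
      exact hw.1
    have hw2t : (∑' q : S × S, ((χ q.2 : ℤ) : ℝ) ^ m * p q.1 q.2) = F χ := by
      rw [hswap]
      refine ((Equiv.prodComm S S).tsum_eq
        (fun q : S × S => ((χ q.1 : ℤ) : ℝ) ^ m * p q.1 q.2)).trans ?_
      rw [hw.2, hFχ]
    -- dominating function
    set gfun : S × S → ℝ := fun q => ((2:ℝ) ^ m - 1) *
        (p q.1 q.2 * (4 * ((χ q.1 : ℤ) : ℝ) ^ m + ((χ q.2 : ℤ) : ℝ) ^ m)) with hgdef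
    have hg0 : ∀ q, 0 ≤ gfun q := by
      intro q
      apply mul_nonneg hC0
      apply mul_nonneg (hp_nonneg _ _)
      have h1 := pow_nonneg (hc0 q.1) m
      have h2 := pow_nonneg (hc0 q.2) m
      linarith
    have hgsplit : gfun = fun q : S × S =>
        (4 * ((2:ℝ) ^ m - 1)) * (((χ q.1 : ℤ) : ℝ) ^ m * p q.1 q.2)
        + ((2:ℝ) ^ m - 1) * (((χ q.2 : ℤ) : ℝ) ^ m * p q.1 q.2) := by
      funext q
      simp only [hgdef]
      ring
    have hgs : Summable gfun := by
      rw [hgsplit]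
      exact (hw.1.mul_left _).add (hw2s.mul_left _)
    have hgt : ∑' q, gfun q = 5 * ((2:ℝ) ^ m - 1) * F χ := by
      rw [hgsplit, Summable.tsum_add (hw.1.mul_left _) (hw2s.mul_left _), tsum_mul_left, tsum_mul_left,
        hw.2, ← hFχ, hw2t]
      ring
    -- pointwise bound
    have hpt : ∀ q : S × S, |((χ q.1 : ℤ) : ℝ) * p q.1 q.2 *
        (F (χ + Finsupp.single q.2 1 - Finsupp.single q.1 1) - F χ)| ≤ gfun q := by
      rintro ⟨x, y⟩
      rcases eq_or_lt_of_le (hχ x) with h0 | h1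
      · have hz : ((χ x : ℤ) : ℝ) = 0 := by rw [← h0]; norm_num
        simp only []
        rw [hz, zero_mul, zero_mul, abs_zero]
        exact hg0 (x, y)
      · have hx1 : (1:ℝ) ≤ ((χ x : ℤ) : ℝ) := by exact_mod_cast h1
        by_cases hxy : x = y
        · subst hxy
          have hid : χ + Finsupp.single x (1:ℤ) - Finsupp.single x 1 = χ :=
            add_sub_cancel_right _ _
          simp only []
          rw [hid, sub_self, mul_zero, abs_zero]
          exact hg0 (x, x)
        · have hsupp : (Finsupp.single y (1:ℤ) - Finsupp.single x 1).support ⊆ {x, y} := by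
            intro z hz
            simp only [Finset.mem_insert, Finset.mem_singleton]
            by_contra hc
            push_neg at hc
            apply Finsupp.mem_support_iff.mp hz
            rw [Finsupp.sub_apply, Finsupp.single_apply, Finsupp.single_apply,
              if_neg (fun h => hc.2 h.symm), if_neg (fun h => hc.1 h.symm)]
            ring
          have hrw : χ + Finsupp.single y (1:ℤ) - Finsupp.single x 1
              = χ + (Finsupp.single y 1 - Finsupp.single x 1) := by
            rw [add_sub_assoc]
          have hdiff := aux_F_diff m hm1 χ (Finsupp.single y 1 - Finsupp.single x 1) {x, y} hsupp
          have hvx : ((χ + (Finsupp.single y (1:ℤ) - Finsupp.single x 1)) : S →₀ ℤ) x = χ x - 1 := by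
            rw [Finsupp.add_apply, Finsupp.sub_apply, Finsupp.single_apply, Finsupp.single_apply,
              if_neg (Ne.symm hxy), if_pos rfl]
            ring
          have hvy : ((χ + (Finsupp.single y (1:ℤ) - Finsupp.single x 1)) : S →₀ ℤ) y = χ y + 1 := by
            rw [Finsupp.add_apply, Finsupp.sub_apply, Finsupp.single_apply, Finsupp.single_apply,
              if_pos rfl, if_neg hxy]
            ring
          have hax : |χ x - 1| = χ x - 1 := abs_of_nonneg (by
            have : (1:ℤ) ≤ χ x := by exact_mod_cast h1
            omega)
          have hay : |χ y + 1| = χ y + 1 := abs_of_nonneg (by have := hχ y; omega)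
          have haxχ : |χ x| = χ x := abs_of_nonneg (hχ x)
          have hayχ : |χ y| = χ y := abs_of_nonneg (hχ y)
          rw [Finset.sum_pair hxy] at hdiff
          rw [hvx, hvy, hax, hay, haxχ, hayχ] at hdiff
          have hFeq : F (χ + Finsupp.single y (1:ℤ) - Finsupp.single x 1) - F χ
              = ((((χ x : ℤ) : ℝ) - 1) ^ m - ((χ x : ℤ) : ℝ) ^ m)
                + ((((χ y : ℤ) : ℝ) + 1) ^ m - ((χ y : ℤ) : ℝ) ^ m) := by
            rw [hrw]
            simp only [hFdef]
            rw [hdiff]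
            push_cast
            ring
          simp only []
          rw [hFeq]
          have hkey := aux_mig_pointwise m hm1 ((χ x : ℤ) : ℝ) ((χ y : ℤ) : ℝ) hx1 (hc0 y)
          calc |((χ x : ℤ) : ℝ) * p x y *
              (((((χ x : ℤ) : ℝ) - 1) ^ m - ((χ x : ℤ) : ℝ) ^ m)
                + ((((χ y : ℤ) : ℝ) + 1) ^ m - ((χ y : ℤ) : ℝ) ^ m))|
              = p x y * (((χ x : ℤ) : ℝ) *
                |((((χ x : ℤ) : ℝ) - 1) ^ m - ((χ x : ℤ) : ℝ) ^ m)
                + ((((χ y : ℤ) : ℝ) + 1) ^ m - ((χ y : ℤ) : ℝ) ^ m)|) := by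
                rw [abs_mul, abs_mul, abs_of_nonneg (hc0 x), abs_of_nonneg (hp_nonneg x y)]
                ring
            _ ≤ p x y * (((2:ℝ) ^ m - 1) *
                (4 * ((χ x : ℤ) : ℝ) ^ m + ((χ y : ℤ) : ℝ) ^ m)) :=
                mul_le_mul_of_nonneg_left hkey (hp_nonneg x y)
            _ = gfun (x, y) := by simp only [hgdef]; ring
    -- conclude
    have habs_s : Summable (fun q : S × S => |((χ q.1 : ℤ) : ℝ) * p q.1 q.2 *
        (F (χ + Finsupp.single q.2 1 - Finsupp.single q.1 1) - F χ)|) :=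
      Summable.of_nonneg_of_le (fun q => abs_nonneg _) hpt hgs
    have hfs : Summable (fun q : S × S => ((χ q.1 : ℤ) : ℝ) * p q.1 q.2 *
        (F (χ + Finsupp.single q.2 1 - Finsupp.single q.1 1) - F χ)) :=
      Summable.of_abs habs_s
    calc |∑' q : S × S, ((χ q.1 : ℤ) : ℝ) * p q.1 q.2 *
        (F (χ + Finsupp.single q.2 1 - Finsupp.single q.1 1) - F χ)|
        ≤ ∑' q : S × S, |((χ q.1 : ℤ) : ℝ) * p q.1 q.2 *
          (F (χ + Finsupp.single q.2 1 - Finsupp.single q.1 1) - F χ)| := by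
          exact aux_abs_tsum_le _ habs_s
      _ ≤ ∑' q, gfun q := Summable.tsum_le_tsum hpt habs_s hgs
      _ = 5 * ((2:ℝ) ^ m - 1) * F χ := hgt
  -- ====================== branching bound ======================
  have bra : ∀ (χ ξ : S →₀ ℤ), (∀ x, (0:ℤ) ≤ χ x) → (∀ x, (0:ℤ) ≤ ξ x) →
      |∑' x : S, ((χ x : ℤ) : ℝ) * ((ξ x : ℤ) : ℝ) *
        ∑' k : ℕ, ν k * (F (χ + Finsupp.single x ((k : ℤ) - 1)) - F χ)| ≤
      Bm * (F χ + F ξ) := by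
    intro χ ξ hχ hξ
    have hc0 : ∀ x, (0:ℝ) ≤ ((χ x : ℤ) : ℝ) := fun x => by exact_mod_cast hχ x
    have hd0 : ∀ x, (0:ℝ) ≤ ((ξ x : ℤ) : ℝ) := fun x => by exact_mod_cast hξ x
    have hFχ : F χ = ∑' x, ((χ x : ℤ) : ℝ) ^ m := by
      simp only [hFdef]
      exact tsum_congr fun x => by rw [abs_of_nonneg (hχ x)]
    have hFξ : F ξ = ∑' x, ((ξ x : ℤ) : ℝ) ^ m := by
      simp only [hFdef]
      exact tsum_congr fun x => by rw [abs_of_nonneg (hξ x)]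
    have hsum_cm : Summable (fun x => ((χ x : ℤ) : ℝ) ^ m) :=
      (hFs χ).congr fun x => by rw [abs_of_nonneg (hχ x)]
    have hsum_dm : Summable (fun x => ((ξ x : ℤ) : ℝ) ^ m) :=
      (hFs ξ).congr fun x => by rw [abs_of_nonneg (hξ x)]
    -- inner identity
    have hinner : ∀ x : S, (1:ℤ) ≤ χ x →
        (∑' k : ℕ, ν k * (F (χ + Finsupp.single x ((k : ℤ) - 1)) - F χ))
        = ∑ j ∈ Finset.Icc 2 m, (∑' k : ℕ, ν k * ((k:ℝ) - 1) ^ j) *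
            (((χ x : ℤ) : ℝ) ^ (m - j) * (m.choose j : ℝ)) := by
      intro x hx1
      have hptk : ∀ k : ℕ, F (χ + Finsupp.single x ((k : ℤ) - 1)) - F χ
          = ∑ j ∈ Finset.Icc 1 m,
              ((k:ℝ) - 1) ^ j * ((χ x : ℤ) : ℝ) ^ (m - j) * (m.choose j : ℝ) := by
        intro k
        have hsupp : (Finsupp.single x ((k:ℤ) - 1)).support ⊆ {x} :=
          Finsupp.support_single_subset
        have hdiff := aux_F_diff m hm1 χ (Finsupp.single x ((k:ℤ) - 1)) {x} hsupp
        rw [Finset.sum_singleton] at hdiff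
        have hval : ((χ + Finsupp.single x ((k:ℤ) - 1)) : S →₀ ℤ) x = χ x + ((k:ℤ) - 1) := by
          rw [Finsupp.add_apply, Finsupp.single_apply, if_pos rfl]
        have habs1 : |χ x + ((k:ℤ) - 1)| = χ x + ((k:ℤ) - 1) := abs_of_nonneg (by
          have hk : (0:ℤ) ≤ (k:ℤ) := Int.ofNat_nonneg k
          omega)
        have habs2 : |χ x| = χ x := abs_of_nonneg (hχ x)
        rw [hval, habs1, habs2] at hdiff
        have : F (χ + Finsupp.single x ((k:ℤ) - 1)) - F χ
            = (((χ x : ℤ) : ℝ) + ((k:ℝ) - 1)) ^ m - ((χ x : ℤ) : ℝ) ^ m := by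
          simp only [hFdef]
          rw [hdiff]
          push_cast
          ring
        rw [this, aux_expand m (((χ x : ℤ) : ℝ)) ((k:ℝ) - 1)]
      have hsumm_each : ∀ j ∈ Finset.Icc 1 m, Summable (fun k : ℕ =>
          ν k * (((k:ℝ) - 1) ^ j * ((χ x : ℤ) : ℝ) ^ (m - j) * (m.choose j : ℝ))) := by
        intro j hj
        have hjm : j ≤ m := (Finset.mem_Icc.mp hj).2
        have he : (fun k : ℕ => ν k * (((k:ℝ) - 1) ^ j * ((χ x : ℤ) : ℝ) ^ (m - j)
            * (m.choose j : ℝ)))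
            = fun k : ℕ => (ν k * ((k:ℝ) - 1) ^ j) * (((χ x : ℤ) : ℝ) ^ (m - j)
              * (m.choose j : ℝ)) := by
          funext k; ring
        rw [he]
        exact (hsum_j j hjm).mul_right _
      calc (∑' k : ℕ, ν k * (F (χ + Finsupp.single x ((k : ℤ) - 1)) - F χ))
          = ∑' k : ℕ, ∑ j ∈ Finset.Icc 1 m,
              ν k * (((k:ℝ) - 1) ^ j * ((χ x : ℤ) : ℝ) ^ (m - j) * (m.choose j : ℝ)) := by
            apply tsum_congr
            intro k
            rw [hptk k, Finset.mul_sum]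
        _ = ∑ j ∈ Finset.Icc 1 m, ∑' k : ℕ,
              ν k * (((k:ℝ) - 1) ^ j * ((χ x : ℤ) : ℝ) ^ (m - j) * (m.choose j : ℝ)) :=
            Summable.tsum_finsetSum hsumm_each
        _ = ∑ j ∈ Finset.Icc 1 m, (∑' k : ℕ, ν k * ((k:ℝ) - 1) ^ j) *
              (((χ x : ℤ) : ℝ) ^ (m - j) * (m.choose j : ℝ)) := by
            apply Finset.sum_congr rfl
            intro j _
            rw [show (fun k : ℕ => ν k * (((k:ℝ) - 1) ^ j * ((χ x : ℤ) : ℝ) ^ (m - j)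
                * (m.choose j : ℝ)))
                = fun k : ℕ => (ν k * ((k:ℝ) - 1) ^ j) * (((χ x : ℤ) : ℝ) ^ (m - j)
                  * (m.choose j : ℝ)) from by funext k; ring]
            rw [tsum_mul_right]
        _ = ∑ j ∈ Finset.Icc 2 m, (∑' k : ℕ, ν k * ((k:ℝ) - 1) ^ j) *
              (((χ x : ℤ) : ℝ) ^ (m - j) * (m.choose j : ℝ)) := by
            have hI : Finset.Icc 1 m = insert 1 (Finset.Icc 2 m) := by
              ext j
              simp only [Finset.mem_Icc, Finset.mem_insert]
              omega
            rw [hI, Finset.sum_insert (by simp)]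
            have h1 : (∑' k : ℕ, ν k * ((k:ℝ) - 1) ^ 1) = 0 := by
              rw [show (fun k : ℕ => ν k * ((k:ℝ) - 1) ^ 1)
                = fun k : ℕ => ν k * ((k:ℝ) - 1) from by funext k; rw [pow_one]]
              exact hμ1
            rw [h1, zero_mul, zero_add]
    -- pointwise bound in x
    have hptx : ∀ x : S, |((χ x : ℤ) : ℝ) * ((ξ x : ℤ) : ℝ) *
        ∑' k : ℕ, ν k * (F (χ + Finsupp.single x ((k : ℤ) - 1)) - F χ)|
        ≤ Bm * (((χ x : ℤ) : ℝ) ^ m + ((ξ x : ℤ) : ℝ) ^ m) := by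
      intro x
      have hRHS0 : 0 ≤ Bm * (((χ x : ℤ) : ℝ) ^ m + ((ξ x : ℤ) : ℝ) ^ m) := by
        apply mul_nonneg hBm0
        have := hc0 x; have := hd0 x
        positivity
      rcases eq_or_lt_of_le (hχ x) with h0 | h1
      · have hz : ((χ x : ℤ) : ℝ) = 0 := by rw [← h0]; norm_num
        have hz0 : ((χ x : ℤ) : ℝ) * ((ξ x : ℤ) : ℝ) *
            (∑' k : ℕ, ν k * (F (χ + Finsupp.single x ((k : ℤ) - 1)) - F χ)) = 0 := by
          rw [hz]; ring
        rw [hz0, abs_zero]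
        exact hRHS0
      · have hx1 : (1:ℤ) ≤ χ x := h1
        have hx1' : (1:ℝ) ≤ ((χ x : ℤ) : ℝ) := by exact_mod_cast h1
        rw [hinner x hx1, Finset.mul_sum]
        calc |∑ j ∈ Finset.Icc 2 m, ((χ x : ℤ) : ℝ) * ((ξ x : ℤ) : ℝ) *
              ((∑' k : ℕ, ν k * ((k:ℝ) - 1) ^ j) *
                (((χ x : ℤ) : ℝ) ^ (m - j) * (m.choose j : ℝ)))|
            ≤ ∑ j ∈ Finset.Icc 2 m, |((χ x : ℤ) : ℝ) * ((ξ x : ℤ) : ℝ) *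
              ((∑' k : ℕ, ν k * ((k:ℝ) - 1) ^ j) *
                (((χ x : ℤ) : ℝ) ^ (m - j) * (m.choose j : ℝ)))| :=
              Finset.abs_sum_le_sum_abs _ _
          _ ≤ ∑ j ∈ Finset.Icc 2 m, ((m.choose j : ℝ) * ∑' k : ℕ, ν k * |(k:ℝ) - 1| ^ j) *
              (((χ x : ℤ) : ℝ) ^ m + ((ξ x : ℤ) : ℝ) ^ m) := by
              apply Finset.sum_le_sum
              intro j hj
              obtain ⟨hj2, hjm⟩ := Finset.mem_Icc.mp hj
              set μ := ∑' k : ℕ, ν k * ((k:ℝ) - 1) ^ j with hμdef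
              set M := ∑' k : ℕ, ν k * |(k:ℝ) - 1| ^ j with hMdef
              have hM0 : 0 ≤ M :=
                tsum_nonneg (fun k => mul_nonneg (hν_nonneg k) (by positivity))
              have hμM : |μ| ≤ M := by
                have h1 := aux_abs_tsum_le (fun k : ℕ => ν k * ((k:ℝ) - 1) ^ j)
                  (hsum_j j hjm).abs
                calc |μ| ≤ ∑' k : ℕ, |ν k * ((k:ℝ) - 1) ^ j| := h1
                  _ = M := by
                    apply tsum_congr
                    intro k
                    rw [abs_mul, abs_of_nonneg (hν_nonneg k), abs_pow]
              -- core per-term inequality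
              have hcx := hc0 x
              have hdx := hd0 x
              have hpow1 : ((χ x : ℤ) : ℝ) ^ (m - j) * ((χ x : ℤ) : ℝ)
                  = ((χ x : ℤ) : ℝ) ^ (m - j + 1) := by
                rw [pow_succ]
              have hpow2 : ((χ x : ℤ) : ℝ) ^ (m - j + 1) ≤ ((χ x : ℤ) : ℝ) ^ (m - 1) :=
                pow_le_pow_right₀ hx1' (by omega)
              have hyoung : ((χ x : ℤ) : ℝ) ^ (m - 1) * ((ξ x : ℤ) : ℝ)
                  ≤ ((χ x : ℤ) : ℝ) ^ m + ((ξ x : ℤ) : ℝ) ^ m :=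
                aux_young m hm1 _ _ hcx hdx
              have habs_term : |((χ x : ℤ) : ℝ) * ((ξ x : ℤ) : ℝ) *
                  (μ * (((χ x : ℤ) : ℝ) ^ (m - j) * (m.choose j : ℝ)))|
                  = |μ| * ((m.choose j : ℝ) *
                    (((χ x : ℤ) : ℝ) ^ (m - j) * ((χ x : ℤ) : ℝ) * ((ξ x : ℤ) : ℝ))) := by
                rw [abs_mul (((χ x : ℤ) : ℝ) * ((ξ x : ℤ) : ℝ))
                    (μ * (((χ x : ℤ) : ℝ) ^ (m - j) * (m.choose j : ℝ))),
                  abs_mul μ (((χ x : ℤ) : ℝ) ^ (m - j) * (m.choose j : ℝ)),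
                  abs_of_nonneg (mul_nonneg hcx hdx),
                  abs_of_nonneg (mul_nonneg (pow_nonneg hcx _)
                    (Nat.cast_nonneg (m.choose j) : (0:ℝ) ≤ (m.choose j : ℝ)))]
                ring
              rw [habs_term]
              have hchain : ((χ x : ℤ) : ℝ) ^ (m - j) * ((χ x : ℤ) : ℝ) * ((ξ x : ℤ) : ℝ)
                  ≤ ((χ x : ℤ) : ℝ) ^ m + ((ξ x : ℤ) : ℝ) ^ m := by
                rw [hpow1]
                calc ((χ x : ℤ) : ℝ) ^ (m - j + 1) * ((ξ x : ℤ) : ℝ)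
                    ≤ ((χ x : ℤ) : ℝ) ^ (m - 1) * ((ξ x : ℤ) : ℝ) :=
                      mul_le_mul_of_nonneg_right hpow2 hdx
                  _ ≤ ((χ x : ℤ) : ℝ) ^ m + ((ξ x : ℤ) : ℝ) ^ m := hyoung
              calc |μ| * ((m.choose j : ℝ) *
                    (((χ x : ℤ) : ℝ) ^ (m - j) * ((χ x : ℤ) : ℝ) * ((ξ x : ℤ) : ℝ)))
                  ≤ M * ((m.choose j : ℝ) *
                    (((χ x : ℤ) : ℝ) ^ (m - j) * ((χ x : ℤ) : ℝ) * ((ξ x : ℤ) : ℝ))) := by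
                    apply mul_le_mul_of_nonneg_right hμM
                    apply mul_nonneg (Nat.cast_nonneg _)
                    apply mul_nonneg (mul_nonneg (pow_nonneg hcx _) hcx) hdx
                _ ≤ M * ((m.choose j : ℝ) *
                    (((χ x : ℤ) : ℝ) ^ m + ((ξ x : ℤ) : ℝ) ^ m)) := by
                    apply mul_le_mul_of_nonneg_left _ hM0
                    exact mul_le_mul_of_nonneg_left hchain (Nat.cast_nonneg _)
                _ = ((m.choose j : ℝ) * M) *
                    (((χ x : ℤ) : ℝ) ^ m + ((ξ x : ℤ) : ℝ) ^ m) := by ring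
          _ = Bm * (((χ x : ℤ) : ℝ) ^ m + ((ξ x : ℤ) : ℝ) ^ m) := by
              rw [hBdef, Finset.sum_mul]
    -- sum the pointwise bound
    have hg3s : Summable (fun x : S =>
        Bm * (((χ x : ℤ) : ℝ) ^ m + ((ξ x : ℤ) : ℝ) ^ m)) :=
      ((hsum_cm.add hsum_dm).mul_left Bm)
    have habs_s : Summable (fun x : S => |((χ x : ℤ) : ℝ) * ((ξ x : ℤ) : ℝ) *
        ∑' k : ℕ, ν k * (F (χ + Finsupp.single x ((k : ℤ) - 1)) - F χ)|) :=
      Summable.of_nonneg_of_le (fun x => abs_nonneg _) hptx hg3s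
    calc |∑' x : S, ((χ x : ℤ) : ℝ) * ((ξ x : ℤ) : ℝ) *
        ∑' k : ℕ, ν k * (F (χ + Finsupp.single x ((k : ℤ) - 1)) - F χ)|
        ≤ ∑' x : S, |((χ x : ℤ) : ℝ) * ((ξ x : ℤ) : ℝ) *
          ∑' k : ℕ, ν k * (F (χ + Finsupp.single x ((k : ℤ) - 1)) - F χ)| := by
          exact aux_abs_tsum_le _ habs_s
      _ ≤ ∑' x : S, Bm * (((χ x : ℤ) : ℝ) ^ m + ((ξ x : ℤ) : ℝ) ^ m) :=
          Summable.tsum_le_tsum hptx habs_s hg3s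
      _ = Bm * (F χ + F ξ) := by
          rw [tsum_mul_left, Summable.tsum_add hsum_cm hsum_dm, ← hFχ, ← hFξ]
  -- ====================== assembly ======================
  have e1 : (∑' q : S × S, (φ q.1 : ℝ) * p q.1 q.2 *
        (hm (φ + Finsupp.single q.2 1 - Finsupp.single q.1 1) ψ - hm φ ψ))
      = ∑' q : S × S, ((φ q.1 : ℤ) : ℝ) * p q.1 q.2 *
        (F (φ + Finsupp.single q.2 1 - Finsupp.single q.1 1) - F φ) := by
    apply tsum_congr
    intro q
    rw [hmF, hmF]
    ring
  have e2 : (∑' q : S × S, (ψ q.1 : ℝ) * p q.1 q.2 *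
        (hm φ (ψ + Finsupp.single q.2 1 - Finsupp.single q.1 1) - hm φ ψ))
      = ∑' q : S × S, ((ψ q.1 : ℤ) : ℝ) * p q.1 q.2 *
        (F (ψ + Finsupp.single q.2 1 - Finsupp.single q.1 1) - F ψ) := by
    apply tsum_congr
    intro q
    rw [hmF, hmF]
    ring
  have e3 : (∑' x : S, (φ x : ℝ) * (ψ x : ℝ) *
        ∑' k : ℕ, ν k * (hm (φ + Finsupp.single x ((k : ℤ) - 1)) ψ - hm φ ψ))
      = ∑' x : S, ((φ x : ℤ) : ℝ) * ((ψ x : ℤ) : ℝ) *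
        ∑' k : ℕ, ν k * (F (φ + Finsupp.single x ((k : ℤ) - 1)) - F φ) := by
    apply tsum_congr
    intro x
    have hin : (∑' k : ℕ, ν k * (hm (φ + Finsupp.single x ((k : ℤ) - 1)) ψ - hm φ ψ))
        = ∑' k : ℕ, ν k * (F (φ + Finsupp.single x ((k : ℤ) - 1)) - F φ) := by
      apply tsum_congr
      intro k
      rw [hmF, hmF]
      ring
    rw [hin]
  have e4 : (∑' x : S, (φ x : ℝ) * (ψ x : ℝ) *
        ∑' k : ℕ, ν k * (hm φ (ψ + Finsupp.single x ((k : ℤ) - 1)) - hm φ ψ))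
      = ∑' x : S, ((ψ x : ℤ) : ℝ) * ((φ x : ℤ) : ℝ) *
        ∑' k : ℕ, ν k * (F (ψ + Finsupp.single x ((k : ℤ) - 1)) - F ψ) := by
    apply tsum_congr
    intro x
    have hin : (∑' k : ℕ, ν k * (hm φ (ψ + Finsupp.single x ((k : ℤ) - 1)) - hm φ ψ))
        = ∑' k : ℕ, ν k * (F (ψ + Finsupp.single x ((k : ℤ) - 1)) - F ψ) := by
      apply tsum_congr
      intro k
      rw [hmF, hmF]
      ring
    rw [hin]
    ring
  rw [e1, e2, e3, e4, hmF φ ψ]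
  have b1 := mig φ hφ
  have b2 := mig ψ hψ
  have b3 := bra φ ψ hφ hψ
  have b4 := bra ψ φ hψ hφ
  set t1 := ∑' q : S × S, ((φ q.1 : ℤ) : ℝ) * p q.1 q.2 *
      (F (φ + Finsupp.single q.2 1 - Finsupp.single q.1 1) - F φ) with ht1
  set t2 := ∑' q : S × S, ((ψ q.1 : ℤ) : ℝ) * p q.1 q.2 *
      (F (ψ + Finsupp.single q.2 1 - Finsupp.single q.1 1) - F ψ) with ht2
  set t3 := ∑' x : S, ((φ x : ℤ) : ℝ) * ((ψ x : ℤ) : ℝ) *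
      ∑' k : ℕ, ν k * (F (φ + Finsupp.single x ((k : ℤ) - 1)) - F φ) with ht3
  set t4 := ∑' x : S, ((ψ x : ℤ) : ℝ) * ((φ x : ℤ) : ℝ) *
      ∑' k : ℕ, ν k * (F (ψ + Finsupp.single x ((k : ℤ) - 1)) - F ψ) with ht4
  have habs : |κ * t1 + κ * t2 + γ * t3 + γ * t4|
      ≤ κ * |t1| + κ * |t2| + γ * |t3| + γ * |t4| := by
    have h1 := abs_add_le (κ * t1 + κ * t2 + γ * t3) (γ * t4)
    have h2 := abs_add_le (κ * t1 + κ * t2) (γ * t3)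
    have h3 := abs_add_le (κ * t1) (κ * t2)
    have q1 : |κ * t1| = κ * |t1| := by rw [abs_mul, abs_of_pos hκ]
    have q2 : |κ * t2| = κ * |t2| := by rw [abs_mul, abs_of_pos hκ]
    have q3 : |γ * t3| = γ * |t3| := by rw [abs_mul, abs_of_pos hγ]
    have q4 : |γ * t4| = γ * |t4| := by rw [abs_mul, abs_of_pos hγ]
    linarith [h1, h2, h3, q1, q2, q3, q4]
  have c1 : κ * |t1| ≤ κ * (5 * ((2:ℝ) ^ m - 1) * F φ) :=
    mul_le_mul_of_nonneg_left b1 hκ.le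
  have c2 : κ * |t2| ≤ κ * (5 * ((2:ℝ) ^ m - 1) * F ψ) :=
    mul_le_mul_of_nonneg_left b2 hκ.le
  have c3 : γ * |t3| ≤ γ * (Bm * (F φ + F ψ)) :=
    mul_le_mul_of_nonneg_left b3 hγ.le
  have c4 : γ * |t4| ≤ γ * (Bm * (F ψ + F φ)) :=
    mul_le_mul_of_nonneg_left b4 hγ.le
  have hslack : 0 ≤ γ * (Bm * (F φ + F ψ)) := by
    apply mul_nonneg hγ.le
    apply mul_nonneg hBm0
    have := hF0 φ; have := hF0 ψ
    linarith
  have hid : (5 * κ * ((2:ℝ) ^ m - 1) + 3 * γ * Bm) * (F φ + F ψ)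
      = κ * (5 * ((2:ℝ) ^ m - 1) * F φ) + κ * (5 * ((2:ℝ) ^ m - 1) * F ψ)
        + γ * (Bm * (F φ + F ψ)) + γ * (Bm * (F ψ + F φ))
        + γ * (Bm * (F φ + F ψ)) := by ring
  linarith
end

section
/- Let (ν_k)_{k≥0} be a probability distribution on the nonnegative integers with Σ_k k ν_k = 1, put σ² = Σ_k ν_k (k−1)² and m₃ = Σ_k ν_k |k−1|³, and assume m₃ < ∞. Then there exists a universal constant C > 0 such that for all reals a, b ≥ 0, setting w = (a+b) + i(a−b): | Σ_{k≥0} ν_k ( e^{−(k−1)w} − 1 ) − (1/2) σ² w² | ≤ C · m₃ · e^{a+b} · (a³ + b³). -/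
lemma exp_taylor2_bound (z : ℂ) (M : ℝ) (hM : 0 ≤ M) (hre : z.re ≤ M) :
    ‖Complex.exp z - 1 - z - z ^ 2 / 2‖
      ≤ ‖z‖ ^ 3 * Real.exp M := by
  have hcoef : ∀ t : ℝ, HasDerivAt (fun t : ℝ => (t : ℂ) * z) z t := by
    intro t
    simpa using (Complex.ofRealCLM.hasDerivAt (x := t)).mul_const z
  have hdexp : ∀ t : ℝ,
      HasDerivAt (fun t : ℝ => Complex.exp ((t : ℂ) * z))
        (Complex.exp ((t : ℂ) * z) * z) t := fun t => (hcoef t).cexp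
  -- bound on |exp (t z)| for t ∈ [0,1]
  have hbexp : ∀ t : ℝ, t ∈ Set.Icc (0:ℝ) 1 →
      ‖Complex.exp ((t : ℂ) * z)‖ ≤ Real.exp M := by
    intro t ht
    rw [Complex.norm_exp]
    apply Real.exp_le_exp.2
    have : ((t : ℂ) * z).re = t * z.re := by simp
    rw [this]
    rcases le_or_gt 0 z.re with h | h
    · nlinarith [ht.1, ht.2]
    · nlinarith [ht.1, ht.2]
  -- Round 1 : ‖exp (t z) - 1‖ ≤ |z| e^M on [0,1]
  have h1 : ∀ t : ℝ, t ∈ Set.Icc (0:ℝ) 1 →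
      ‖Complex.exp ((t : ℂ) * z) - 1‖ ≤ ‖z‖ * Real.exp M := by
    intro t ht
    have := (convex_Icc (0:ℝ) 1).norm_image_sub_le_of_norm_hasDerivWithin_le
      (f := fun t : ℝ => Complex.exp ((t : ℂ) * z))
      (f' := fun t : ℝ => Complex.exp ((t : ℂ) * z) * z)
      (fun s hs => (hdexp s).hasDerivWithinAt)
      (C := ‖z‖ * Real.exp M)
      (fun s hs => by
        rw [norm_mul]
        calc ‖Complex.exp ((s : ℂ) * z)‖ * ‖z‖
            ≤ Real.exp M * ‖z‖ := by
              exact mul_le_mul_of_nonneg_right (hbexp s hs) (norm_nonneg _)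
          _ = ‖z‖ * Real.exp M := by rw [mul_comm])
      (Set.left_mem_Icc.2 one_pos.le) ht
    simp only [Complex.ofReal_zero, zero_mul, Complex.exp_zero] at this
    calc ‖Complex.exp ((t : ℂ) * z) - 1‖
        ≤ ‖z‖ * Real.exp M * ‖t - 0‖ := this
      _ ≤ ‖z‖ * Real.exp M * 1 := by
          apply mul_le_mul_of_nonneg_left _ (by positivity)
          rw [Real.norm_eq_abs, sub_zero, abs_of_nonneg ht.1]; exact ht.2
      _ = ‖z‖ * Real.exp M := mul_one _
  -- Round 2
  have hd1 : ∀ t : ℝ, HasDerivAt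
      (fun t : ℝ => Complex.exp ((t : ℂ) * z) - 1 - (t : ℂ) * z)
      (z * (Complex.exp ((t : ℂ) * z) - 1)) t := by
    intro t
    have := ((hdexp t).sub_const 1).sub (hcoef t)
    exact this.congr_deriv (by ring)
  have h2 : ∀ t : ℝ, t ∈ Set.Icc (0:ℝ) 1 →
      ‖Complex.exp ((t : ℂ) * z) - 1 - (t : ℂ) * z‖
        ≤ ‖z‖ ^ 2 * Real.exp M := by
    intro t ht
    have := (convex_Icc (0:ℝ) 1).norm_image_sub_le_of_norm_hasDerivWithin_le
      (f := fun t : ℝ => Complex.exp ((t : ℂ) * z) - 1 - (t : ℂ) * z)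
      (f' := fun t : ℝ => z * (Complex.exp ((t : ℂ) * z) - 1))
      (fun s hs => (hd1 s).hasDerivWithinAt)
      (C := ‖z‖ ^ 2 * Real.exp M)
      (fun s hs => by
        rw [norm_mul]
        have := h1 s hs
        calc ‖z‖ * ‖Complex.exp ((s : ℂ) * z) - 1‖
            ≤ ‖z‖ * (‖z‖ * Real.exp M) :=
              mul_le_mul_of_nonneg_left this (norm_nonneg _)
          _ = ‖z‖ ^ 2 * Real.exp M := by ring)
      (Set.left_mem_Icc.2 one_pos.le) ht
    simp only [Complex.ofReal_zero, zero_mul, Complex.exp_zero, sub_self, sub_zero] at this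
    calc ‖Complex.exp ((t : ℂ) * z) - 1 - (t : ℂ) * z‖
        ≤ ‖z‖ ^ 2 * Real.exp M * ‖t - 0‖ := by
          simpa using this
      _ ≤ ‖z‖ ^ 2 * Real.exp M * 1 := by
          apply mul_le_mul_of_nonneg_left _ (by positivity)
          rw [Real.norm_eq_abs, sub_zero, abs_of_nonneg ht.1]; exact ht.2
      _ = ‖z‖ ^ 2 * Real.exp M := mul_one _
  -- Round 3
  have hd2 : ∀ t : ℝ, HasDerivAt
      (fun t : ℝ => Complex.exp ((t : ℂ) * z) - 1 - (t : ℂ) * z - ((t : ℂ) * z) * ((t : ℂ) * z) / 2)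
      (z * (Complex.exp ((t : ℂ) * z) - 1 - (t : ℂ) * z)) t := by
    intro t
    have hsq := (((hcoef t).mul (hcoef t)).div_const 2)
    have := (((hdexp t).sub_const 1).sub (hcoef t)).sub hsq
    exact this.congr_deriv (by ring)
  have h3 := (convex_Icc (0:ℝ) 1).norm_image_sub_le_of_norm_hasDerivWithin_le
      (f := fun t : ℝ => Complex.exp ((t : ℂ) * z) - 1 - (t : ℂ) * z - ((t : ℂ) * z) * ((t : ℂ) * z) / 2)
      (f' := fun t : ℝ => z * (Complex.exp ((t : ℂ) * z) - 1 - (t : ℂ) * z))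
      (fun s hs => (hd2 s).hasDerivWithinAt)
      (C := ‖z‖ ^ 3 * Real.exp M)
      (fun s hs => by
        rw [norm_mul]
        have := h2 s hs
        calc ‖z‖ * ‖Complex.exp ((s : ℂ) * z) - 1 - (s : ℂ) * z‖
            ≤ ‖z‖ * (‖z‖ ^ 2 * Real.exp M) :=
              mul_le_mul_of_nonneg_left this (norm_nonneg _)
          _ = ‖z‖ ^ 3 * Real.exp M := by ring)
      (Set.left_mem_Icc.2 one_pos.le) (Set.right_mem_Icc.2 one_pos.le)
  simp only [Complex.ofReal_zero, zero_mul, Complex.exp_zero, sub_self, sub_zero,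
    Complex.ofReal_one, one_mul] at h3
  have hz2 : z ^ 2 = z * z := sq z
  calc ‖Complex.exp z - 1 - z - z ^ 2 / 2‖
      ≤ ‖z‖ ^ 3 * Real.exp M * ‖(1:ℝ) - 0‖ := by
        rw [hz2]; simpa using h3
    _ = ‖z‖ ^ 3 * Real.exp M := by norm_num


/- STATEMENT 15: the Taylor remainder bound for the branching terms in the
approximate-duality generator expansion, for a critical branching law with
finite third moment. -/
theorem br_taylor_remainder_bound (ν : ℕ → ℝ)
    (hν_nonneg : ∀ k, 0 ≤ ν k) (hν_sum : ∑' k, ν k = 1)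
    (hν_mean_summable : Summable fun k : ℕ => (k : ℝ) * ν k)
    (hν_mean : ∑' k : ℕ, (k : ℝ) * ν k = 1)
    (hν_m3 : Summable fun k : ℕ => ν k * |(k : ℝ) - 1| ^ 3) :
    ∃ C : ℝ, 0 < C ∧
      ∀ a b : ℝ, 0 ≤ a → 0 ≤ b →
        ∀ w : ℂ, w = ((a + b : ℝ) : ℂ) + Complex.I * ((a - b : ℝ) : ℂ) →
          norm
              ((∑' k : ℕ, (ν k : ℂ) * (Complex.exp (-((k : ℂ) - 1) * w) - 1))
                - (1 / 2) * ((∑' k : ℕ, ν k * ((k : ℝ) - 1) ^ 2 : ℝ) : ℂ) * w ^ 2)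
            ≤ C * (∑' k : ℕ, ν k * |(k : ℝ) - 1| ^ 3) * Real.exp (a + b)
                * (a ^ 3 + b ^ 3) := by
  have hνs : Summable ν := by
    by_contra h
    rw [tsum_eq_zero_of_not_summable h] at hν_sum
    norm_num at hν_sum
  have hsq : Summable (fun k : ℕ => ν k * ((k : ℝ) - 1) ^ 2) := by
    apply Summable.of_nonneg_of_le (fun k => mul_nonneg (hν_nonneg k) (sq_nonneg _))
      (fun k => ?_) (hνs.add hν_m3)
    set x := |(k : ℝ) - 1| with hxdef
    have hx : (0:ℝ) ≤ x := abs_nonneg _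
    have h2 : ((k:ℝ) - 1) ^ 2 = x ^ 2 := (sq_abs _).symm
    have key : x ^ 2 ≤ 1 + x ^ 3 := by
      nlinarith [mul_nonneg hx (sq_nonneg (x - 1)), sq_nonneg (x - 1)]
    have := mul_le_mul_of_nonneg_left key (hν_nonneg k)
    rw [h2]; linarith [this]
  have hlin : Summable (fun k : ℕ => ν k * ((k : ℝ) - 1)) :=
    (hν_mean_summable.sub hνs).congr (fun k => by ring)
  have hcrit : ∑' k : ℕ, ν k * ((k : ℝ) - 1) = 0 := by
    have h := Summable.tsum_sub hν_mean_summable hνs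
    have h2 : ∑' k : ℕ, ν k * ((k : ℝ) - 1)
        = ∑' k : ℕ, ((k : ℝ) * ν k - ν k) := tsum_congr (fun k => by ring)
    rw [h2, h, hν_mean, hν_sum, sub_self]
  have hM3nonneg : 0 ≤ ∑' k : ℕ, ν k * |(k : ℝ) - 1| ^ 3 :=
    tsum_nonneg (fun k => mul_nonneg (hν_nonneg k) (by positivity))
  refine ⟨32, by norm_num, ?_⟩
  intro a b ha hb w hw
  have hwre : w.re = a + b := by rw [hw]; simp
  have hwabs : ‖w‖ ≤ 2 * (a + b) := by
    rw [hw]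
    have h1 : ‖((a + b : ℝ) : ℂ)‖ = a + b := by
      rw [Complex.norm_real, Real.norm_eq_abs, abs_of_nonneg (by linarith)]
    have h2 : ‖Complex.I * ((a - b : ℝ) : ℂ)‖ = |a - b| := by
      rw [norm_mul, Complex.norm_I, Complex.norm_real, Real.norm_eq_abs, one_mul]
    have h3 : |a - b| ≤ a + b := abs_le.2 ⟨by linarith, by linarith⟩
    calc ‖((a + b : ℝ) : ℂ) + Complex.I * ((a - b : ℝ) : ℂ)‖
        ≤ ‖((a + b : ℝ) : ℂ)‖ + ‖Complex.I * ((a - b : ℝ) : ℂ)‖ :=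
          norm_add_le _ _
      _ ≤ 2 * (a + b) := by rw [h1, h2]; linarith
  have hterm : ∀ k : ℕ,
      ‖(ν k : ℂ) * (Complex.exp (-((k : ℂ) - 1) * w) - 1
          - (-((k : ℂ) - 1) * w) - (-((k : ℂ) - 1) * w) ^ 2 / 2)‖
        ≤ ν k * |(k : ℝ) - 1| ^ 3 * (‖w‖ ^ 3 * Real.exp (a + b)) := by
    intro k
    set z : ℂ := -((k : ℂ) - 1) * w with hz
    have hzeq : z = (((1 : ℝ) - k : ℝ) : ℂ) * w := by rw [hz]; push_cast; ring
    have hz_abs : ‖z‖ = |(k : ℝ) - 1| * ‖w‖ := by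
      rw [hzeq, norm_mul, Complex.norm_real, Real.norm_eq_abs]
      congr 1
      rw [abs_sub_comm]
    have hz_re : z.re ≤ a + b := by
      have h4 : z.re = ((1 : ℝ) - k) * w.re := by rw [hzeq]; simp
      rw [h4, hwre]
      have hk : (0 : ℝ) ≤ (k : ℝ) := Nat.cast_nonneg k
      nlinarith
    have htay := exp_taylor2_bound z (a + b) (by linarith) hz_re
    rw [norm_mul, Complex.norm_real, Real.norm_eq_abs, abs_of_nonneg (hν_nonneg k)]
    calc ν k * ‖Complex.exp z - 1 - z - z ^ 2 / 2‖
        ≤ ν k * (‖z‖ ^ 3 * Real.exp (a + b)) :=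
          mul_le_mul_of_nonneg_left htay (hν_nonneg k)
      _ = ν k * |(k : ℝ) - 1| ^ 3 * (‖w‖ ^ 3 * Real.exp (a + b)) := by
          rw [hz_abs]; ring
  have hnorm_sum : Summable (fun k : ℕ =>
      ‖(ν k : ℂ) * (Complex.exp (-((k : ℂ) - 1) * w) - 1
          - (-((k : ℂ) - 1) * w) - (-((k : ℂ) - 1) * w) ^ 2 / 2)‖) := by
    apply Summable.of_nonneg_of_le (fun k => norm_nonneg _) (fun k => hterm k)
      (hν_m3.mul_right _)
  have hRsum : Summable (fun k : ℕ =>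
      (ν k : ℂ) * (Complex.exp (-((k : ℂ) - 1) * w) - 1
          - (-((k : ℂ) - 1) * w) - (-((k : ℂ) - 1) * w) ^ 2 / 2)) :=
    Summable.of_norm hnorm_sum
  have hlinC : Summable (fun k : ℕ => ((ν k * ((k : ℝ) - 1) : ℝ) : ℂ) * (-w)) :=
    (Complex.summable_ofReal.mpr hlin).mul_right (-w)
  have hsqC : Summable (fun k : ℕ => ((ν k * ((k : ℝ) - 1) ^ 2 : ℝ) : ℂ) * (w ^ 2 / 2)) :=
    (Complex.summable_ofReal.mpr hsq).mul_right (w ^ 2 / 2)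
  have hdecomp : ∀ k : ℕ, (ν k : ℂ) * (Complex.exp (-((k : ℂ) - 1) * w) - 1)
      = (ν k : ℂ) * (Complex.exp (-((k : ℂ) - 1) * w) - 1
          - (-((k : ℂ) - 1) * w) - (-((k : ℂ) - 1) * w) ^ 2 / 2)
        + ((ν k * ((k : ℝ) - 1) : ℝ) : ℂ) * (-w)
        + ((ν k * ((k : ℝ) - 1) ^ 2 : ℝ) : ℂ) * (w ^ 2 / 2) := by
    intro k; push_cast; ring
  have hts : (∑' k : ℕ, (ν k : ℂ) * (Complex.exp (-((k : ℂ) - 1) * w) - 1))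
      = (∑' k : ℕ, (ν k : ℂ) * (Complex.exp (-((k : ℂ) - 1) * w) - 1
          - (-((k : ℂ) - 1) * w) - (-((k : ℂ) - 1) * w) ^ 2 / 2))
        + ((∑' k : ℕ, ν k * ((k : ℝ) - 1) : ℝ) : ℂ) * (-w)
        + ((∑' k : ℕ, ν k * ((k : ℝ) - 1) ^ 2 : ℝ) : ℂ) * (w ^ 2 / 2) := by
    rw [tsum_congr hdecomp, Summable.tsum_add (hRsum.add hlinC) hsqC, Summable.tsum_add hRsum hlinC,
      tsum_mul_right, tsum_mul_right, Complex.ofReal_tsum, Complex.ofReal_tsum]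
  have hfinal : (∑' k : ℕ, (ν k : ℂ) * (Complex.exp (-((k : ℂ) - 1) * w) - 1))
        - (1 / 2) * ((∑' k : ℕ, ν k * ((k : ℝ) - 1) ^ 2 : ℝ) : ℂ) * w ^ 2
      = ∑' k : ℕ, (ν k : ℂ) * (Complex.exp (-((k : ℂ) - 1) * w) - 1
          - (-((k : ℂ) - 1) * w) - (-((k : ℂ) - 1) * w) ^ 2 / 2) := by
    rw [hts, hcrit]
    push_cast
    ring
  rw [hfinal]
  have hw3 : ‖w‖ ^ 3 ≤ 32 * (a ^ 3 + b ^ 3) := by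
    have h1 : ‖w‖ ^ 3 ≤ (2 * (a + b)) ^ 3 :=
      pow_le_pow_left₀ (norm_nonneg _) hwabs 3
    nlinarith [mul_nonneg (sq_nonneg (a - b)) (add_nonneg ha hb)]
  calc ‖∑' k : ℕ, (ν k : ℂ) * (Complex.exp (-((k : ℂ) - 1) * w) - 1
          - (-((k : ℂ) - 1) * w) - (-((k : ℂ) - 1) * w) ^ 2 / 2)‖
      ≤ ∑' k : ℕ, ‖(ν k : ℂ) * (Complex.exp (-((k : ℂ) - 1) * w) - 1
          - (-((k : ℂ) - 1) * w) - (-((k : ℂ) - 1) * w) ^ 2 / 2)‖ :=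
        norm_tsum_le_tsum_norm hnorm_sum
    _ ≤ ∑' k : ℕ, ν k * |(k : ℝ) - 1| ^ 3 * (‖w‖ ^ 3 * Real.exp (a + b)) :=
        Summable.tsum_le_tsum (fun k => hterm k) hnorm_sum (hν_m3.mul_right _)
    _ = (∑' k : ℕ, ν k * |(k : ℝ) - 1| ^ 3) * (‖w‖ ^ 3 * Real.exp (a + b)) :=
        tsum_mul_right
    _ ≤ (∑' k : ℕ, ν k * |(k : ℝ) - 1| ^ 3) * (32 * (a ^ 3 + b ^ 3) * Real.exp (a + b)) := by
        apply mul_le_mul_of_nonneg_left _ hM3nonneg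
        exact mul_le_mul_of_nonneg_right hw3 (Real.exp_pos _).le
    _ = 32 * (∑' k : ℕ, ν k * |(k : ℝ) - 1| ^ 3) * Real.exp (a + b) * (a ^ 3 + b ^ 3) := by
        ring
end

section
/- Let μ and μ' be Borel probability measures on [0,∞)² such that for all a, b ≥ 0: ∫ e^{−(x+y)(a+b) − i(x−y)(a−b)} dμ(x,y) = ∫ e^{−(x+y)(a+b) − i(x−y)(a−b)} dμ'(x,y). Then μ = μ'. (Equivalently, the mixed Laplace–Fourier transform (a,b) ↦ E[e^{−(X+Y)(a+b) − i(X−Y)(a−b)}], a, b ≥ 0, determines the joint distribution of a pair (X,Y) of nonnegative random variables.) -/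
open MeasureTheory
open scoped NNReal ENNReal

noncomputable section LFD

/-- The test integrand. -/
def LFD.G (a b : ℝ) (q : ℝ × ℝ) : ℂ :=
  Complex.exp (-(((q.1 + q.2) * (a + b) : ℝ) : ℂ)
    - Complex.I * (((q.1 - q.2) * (a - b) : ℝ) : ℂ))

namespace LFD

lemma G_mul (a b a' b' : ℝ) (q : ℝ × ℝ) :
    G a b q * G a' b' q = G (a + a') (b + b') q := by
  simp only [G, ← Complex.exp_add]
  congr 1
  push_cast
  ring

lemma G_conj (a b : ℝ) (q : ℝ × ℝ) :
    (starRingEnd ℂ) (G a b q) = G b a q := by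
  simp only [G, ← Complex.exp_conj]
  congr 1
  simp only [map_sub, map_neg, map_mul, Complex.conj_ofReal, Complex.conj_I]
  push_cast
  ring

lemma G_zero (q : ℝ × ℝ) : G 0 0 q = 1 := by
  simp [G]

lemma norm_G (a b : ℝ) (q : ℝ × ℝ) :
    ‖G a b q‖ = Real.exp (-((q.1 + q.2) * (a + b))) := by
  rw [G, Complex.norm_exp]
  congr 1
  simp

lemma continuous_G (a b : ℝ) : Continuous (G a b) := by
  apply Complex.continuous_exp.comp
  fun_prop

end LFD

namespace LFD

def Lam (q : ℝ × ℝ) : ℂ × ℂ := (G 1 0 q, G (1 + Real.sqrt 2) 1 q)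

lemma Lam_injective : Function.Injective Lam := by
  intro p p' hpp
  have h1 : G 1 0 p = G 1 0 p' := congrArg Prod.fst hpp
  have h2 : G (1 + Real.sqrt 2) 1 p = G (1 + Real.sqrt 2) 1 p' := congrArg Prod.snd hpp
  rw [G, G, Complex.exp_eq_exp_iff_exists_int] at h1 h2
  obtain ⟨n, hn⟩ := h1
  obtain ⟨m, hm⟩ := h2
  have hre := congrArg Complex.re hn
  have him := congrArg Complex.im hn
  have him2 := congrArg Complex.im hm
  simp only [Complex.add_re, Complex.sub_re, Complex.neg_re, Complex.ofReal_re,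
    Complex.mul_re, Complex.mul_im, Complex.I_re, Complex.I_im, Complex.ofReal_im,
    Complex.add_im, Complex.sub_im, Complex.neg_im, Complex.intCast_re, Complex.intCast_im,
    Complex.re_ofNat, Complex.im_ofNat] at hre him him2
  have hπ : (Real.pi : ℝ) ≠ 0 := Real.pi_ne_zero
  have hs : p.1 + p.2 = p'.1 + p'.2 := by ring_nf at hre; linarith
  have hd : (p.1 - p.2) - (p'.1 - p'.2) = -(n * (2 * Real.pi)) := by
    ring_nf at him ⊢; linarith
  have hd2 : ((p.1 - p.2) - (p'.1 - p'.2)) * Real.sqrt 2 = -(m * (2 * Real.pi)) := by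
    ring_nf at him2 ⊢; linarith
  have key : (n : ℝ) * Real.sqrt 2 = m := by
    rw [hd] at hd2
    have h2π : (2 * Real.pi) ≠ 0 := by positivity
    apply mul_right_cancel₀ h2π
    linear_combination -hd2
  rcases eq_or_ne n 0 with hn0 | hn0
  · subst hn0
    simp at key hd
    have hd' : p.1 - p.2 = p'.1 - p'.2 := by linarith
    exact Prod.ext (by linarith) (by linarith)
  · exfalso
    have hnR : (n : ℝ) ≠ 0 := Int.cast_ne_zero.mpr hn0
    have hsq : Real.sqrt 2 = (m : ℝ) / (n : ℝ) := by
      field_simp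
      linarith [key]
    exact irrational_sqrt_two ⟨(m : ℚ) / (n : ℚ), by push_cast; rw [hsq]⟩

end LFD

namespace LFD

lemma continuous_Lam : Continuous Lam :=
  (continuous_G 1 0).prodMk (continuous_G (1 + Real.sqrt 2) 1)

def Kset : Set (ℂ × ℂ) := Metric.closedBall 0 1

instance : CompactSpace Kset :=
  isCompact_iff_compactSpace.mp (isCompact_closedBall 0 1)

def rho (q : ℝ × ℝ) : ℝ × ℝ := (max q.1 0, max q.2 0)

lemma continuous_rho : Continuous rho := by
  unfold rho; fun_prop

lemma rho_eq_self {q : ℝ × ℝ} (hq : 0 ≤ q.1 ∧ 0 ≤ q.2) : rho q = q := by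
  simp [rho, max_eq_left hq.1, max_eq_left hq.2]

lemma norm_G_le_one {a b : ℝ} (hab : 0 ≤ a + b) (q : ℝ × ℝ) :
    ‖G a b (rho q)‖ ≤ 1 := by
  rw [norm_G, Real.exp_le_one_iff]
  have h1 : 0 ≤ (rho q).1 := le_max_right _ _
  have h2 : 0 ≤ (rho q).2 := le_max_right _ _
  have : 0 ≤ ((rho q).1 + (rho q).2) * (a + b) := mul_nonneg (by linarith) hab
  linarith

lemma Lam_rho_mem (q : ℝ × ℝ) : Lam (rho q) ∈ Kset := by
  rw [Kset, Metric.mem_closedBall, dist_zero_right, Lam, Prod.norm_def]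
  have h2 : (0:ℝ) ≤ Real.sqrt 2 := Real.sqrt_nonneg 2
  exact max_le (norm_G_le_one (by norm_num) q) (norm_G_le_one (by linarith) q)

def T (q : ℝ × ℝ) : Kset := ⟨Lam (rho q), Lam_rho_mem q⟩

lemma continuous_T : Continuous T :=
  (continuous_Lam.comp continuous_rho).subtype_mk _

def x₁ : C(Kset, ℂ) := ⟨fun w => (w : ℂ × ℂ).1, continuous_fst.comp continuous_subtype_val⟩

def x₂ : C(Kset, ℂ) := ⟨fun w => (w : ℂ × ℂ).2, continuous_snd.comp continuous_subtype_val⟩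

lemma x₁_T (q : ℝ × ℝ) : x₁ (T q) = G 1 0 (rho q) := rfl

lemma x₂_T (q : ℝ × ℝ) : x₂ (T q) = G (1 + Real.sqrt 2) 1 (rho q) := rfl

def A : StarSubalgebra ℂ C(Kset, ℂ) := StarAlgebra.adjoin ℂ {x₁, x₂}

lemma x₁_mem : x₁ ∈ A := StarAlgebra.subset_adjoin ℂ _ (Set.mem_insert _ _)

lemma x₂_mem : x₂ ∈ A := StarAlgebra.subset_adjoin ℂ _ (Set.mem_insert_of_mem _ rfl)

lemma A_separates : A.SeparatesPoints := by
  intro w w' hww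
  have hne : (w : ℂ × ℂ) ≠ (w' : ℂ × ℂ) := fun hc => hww (Subtype.ext hc)
  by_cases h : (w : ℂ × ℂ).1 = (w' : ℂ × ℂ).1
  · have h2 : (w : ℂ × ℂ).2 ≠ (w' : ℂ × ℂ).2 := fun hc => hne (Prod.ext h hc)
    exact ⟨x₂, ⟨x₂, x₂_mem, rfl⟩, h2⟩
  · exact ⟨x₁, ⟨x₁, x₁_mem, rfl⟩, h⟩

end LFD

namespace LFD

lemma monomial_rep :
    ∀ u ∈ Submonoid.closure (({x₁, x₂} : Set C(Kset, ℂ)) ∪ star {x₁, x₂}),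
      ∃ a b : ℝ, 0 ≤ a ∧ 0 ≤ b ∧ ∀ q : ℝ × ℝ, u (T q) = G a b (rho q) := by
  intro u hu
  induction hu using Submonoid.closure_induction with
  | mem v hv =>
    have hsqrt : (0:ℝ) ≤ Real.sqrt 2 := Real.sqrt_nonneg 2
    rcases hv with hv | hv
    · rcases hv with hv | hv
      · exact ⟨1, 0, by norm_num, le_refl 0, fun q => by rw [hv]; exact x₁_T q⟩
      · rw [Set.mem_singleton_iff] at hv
        exact ⟨1 + Real.sqrt 2, 1, by linarith, by norm_num,
          fun q => by rw [hv]; exact x₂_T q⟩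
    · rw [Set.mem_star] at hv
      rcases hv with hv | hv
      · refine ⟨0, 1, le_refl 0, by norm_num, fun q => ?_⟩
        have : v = star x₁ := by rw [← star_star v, hv]
        rw [this]
        show (starRingEnd ℂ) (x₁ (T q)) = _
        rw [x₁_T, G_conj]
      · rw [Set.mem_singleton_iff] at hv
        refine ⟨1, 1 + Real.sqrt 2, by norm_num, by linarith, fun q => ?_⟩
        have : v = star x₂ := by rw [← star_star v, hv]
        rw [this]
        show (starRingEnd ℂ) (x₂ (T q)) = _
        rw [x₂_T, G_conj]
  | one => exact ⟨0, 0, le_refl 0, le_refl 0, fun q => (G_zero (rho q)).symm⟩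
  | mul v v' _ _ ihv ihv' =>
    obtain ⟨a, b, ha, hb, hv⟩ := ihv
    obtain ⟨a', b', ha', hb', hv'⟩ := ihv'
    refine ⟨a + a', b + b', by linarith, by linarith, fun q => ?_⟩
    show v (T q) * v' (T q) = _
    rw [hv, hv', G_mul]

end LFD

namespace LFD

lemma isClosed_cone : IsClosed {q : ℝ × ℝ | 0 ≤ q.1 ∧ 0 ≤ q.2} :=
  (isClosed_le continuous_const continuous_fst).inter
    (isClosed_le continuous_const continuous_snd)

section Meas

variable {μ : Measure (ℝ × ℝ)} [IsProbabilityMeasure μ]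

lemma ae_mem_cone (hμ : μ {q : ℝ × ℝ | 0 ≤ q.1 ∧ 0 ≤ q.2} = 1) :
    ∀ᵐ q ∂μ, rho q = q := by
  have hc : μ {q : ℝ × ℝ | 0 ≤ q.1 ∧ 0 ≤ q.2}ᶜ = 0 := by
    rw [measure_compl isClosed_cone.measurableSet (by simp), hμ, measure_univ, tsub_self]
  have hae : ∀ᵐ q ∂μ, q ∈ {q : ℝ × ℝ | 0 ≤ q.1 ∧ 0 ≤ q.2} := by
    rw [ae_iff]
    exact hc
  filter_upwards [hae] with q hq
  exact rho_eq_self hq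

lemma integrable_comp (u : C(Kset, ℂ)) : Integrable (fun q => u (T q)) μ := by
  refine Integrable.mono' (integrable_const ‖u‖)
    ((u.continuous.comp continuous_T).aestronglyMeasurable) (ae_of_all _ fun q => ?_)
  exact u.norm_coe_le_norm (T q)

end Meas

section Two

variable {μ μ' : Measure (ℝ × ℝ)} [IsProbabilityMeasure μ] [IsProbabilityMeasure μ']

lemma integral_G_eq (hμ : μ {q : ℝ × ℝ | 0 ≤ q.1 ∧ 0 ≤ q.2} = 1)
    (hμ' : μ' {q : ℝ × ℝ | 0 ≤ q.1 ∧ 0 ≤ q.2} = 1)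
    (h : ∀ a b : ℝ, 0 ≤ a → 0 ≤ b →
      (∫ q : ℝ × ℝ, G a b q ∂μ) = ∫ q : ℝ × ℝ, G a b q ∂μ')
    {a b : ℝ} (ha : 0 ≤ a) (hb : 0 ≤ b) :
    (∫ q, G a b (rho q) ∂μ) = ∫ q, G a b (rho q) ∂μ' := by
  have e1 : (∫ q, G a b (rho q) ∂μ) = ∫ q, G a b q ∂μ :=
    integral_congr_ae ((ae_mem_cone hμ).mono fun q hq => by simp only [hq])
  have e2 : (∫ q, G a b (rho q) ∂μ') = ∫ q, G a b q ∂μ' :=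
    integral_congr_ae ((ae_mem_cone hμ').mono fun q hq => by simp only [hq])
  rw [e1, e2, h a b ha hb]

lemma integral_eq_on_A (hμ : μ {q : ℝ × ℝ | 0 ≤ q.1 ∧ 0 ≤ q.2} = 1)
    (hμ' : μ' {q : ℝ × ℝ | 0 ≤ q.1 ∧ 0 ≤ q.2} = 1)
    (h : ∀ a b : ℝ, 0 ≤ a → 0 ≤ b →
      (∫ q : ℝ × ℝ, G a b q ∂μ) = ∫ q : ℝ × ℝ, G a b q ∂μ') :
    ∀ u ∈ A, (∫ q, u (T q) ∂μ) = ∫ q, u (T q) ∂μ' := by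
  intro u hu
  have hu' : u ∈ Submodule.span ℂ
      ((Submonoid.closure (({x₁, x₂} : Set C(Kset, ℂ)) ∪ star {x₁, x₂}) : Submonoid _) :
        Set C(Kset, ℂ)) := by
    rw [← Algebra.adjoin_eq_span]
    exact hu
  clear hu
  induction hu' using Submodule.span_induction with
  | mem v hv =>
    obtain ⟨a, b, ha, hb, hrep⟩ := monomial_rep v hv
    simp only [hrep]
    exact integral_G_eq hμ hμ' h ha hb
  | zero => simp
  | add v v' hv hv' ihv ihv' =>
    have i1 : Integrable (fun q => v (T q)) μ := integrable_comp v
    have i2 : Integrable (fun q => v' (T q)) μ := integrable_comp v'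
    have i1' : Integrable (fun q => v (T q)) μ' := integrable_comp v
    have i2' : Integrable (fun q => v' (T q)) μ' := integrable_comp v'
    simp only [ContinuousMap.add_apply]
    rw [integral_add i1 i2, integral_add i1' i2', ihv, ihv']
  | smul c v hv ihv =>
    simp only [ContinuousMap.smul_apply, smul_eq_mul]
    rw [integral_const_mul, integral_const_mul, ihv]

end Two

end LFD

namespace LFD

section Two2

variable {μ μ' : Measure (ℝ × ℝ)} [IsProbabilityMeasure μ] [IsProbabilityMeasure μ']

lemma integral_eq_all (hμ : μ {q : ℝ × ℝ | 0 ≤ q.1 ∧ 0 ≤ q.2} = 1)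
    (hμ' : μ' {q : ℝ × ℝ | 0 ≤ q.1 ∧ 0 ≤ q.2} = 1)
    (h : ∀ a b : ℝ, 0 ≤ a → 0 ≤ b →
      (∫ q : ℝ × ℝ, G a b q ∂μ) = ∫ q : ℝ × ℝ, G a b q ∂μ')
    (u : C(Kset, ℂ)) :
    (∫ q, u (T q) ∂μ) = ∫ q, u (T q) ∂μ' := by
  have hdense : u ∈ closure (A : Set C(Kset, ℂ)) := by
    have htop := ContinuousMap.starSubalgebra_topologicalClosure_eq_top_of_separatesPoints
      A A_separates
    have : u ∈ A.topologicalClosure := htop ▸ StarSubalgebra.mem_top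
    exact this
  refine eq_of_dist_eq_zero (le_antisymm (le_of_forall_pos_le_add fun ε hε => ?_) dist_nonneg)
  obtain ⟨p, hpA, hdist⟩ := Metric.mem_closure_iff.mp hdense (ε / 2) (by linarith)
  have hkey : ∀ (ν : Measure (ℝ × ℝ)) [IsProbabilityMeasure ν],
      dist (∫ q, u (T q) ∂ν) (∫ q, p (T q) ∂ν) ≤ ε / 2 := by
    intro ν _
    rw [dist_eq_norm, ← integral_sub (integrable_comp u) (integrable_comp p)]
    calc ‖∫ q, (u (T q) - p (T q)) ∂ν‖ ≤ ε / 2 * (ν Set.univ).toReal := by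
          apply norm_integral_le_of_norm_le_const
          refine ae_of_all _ fun q => ?_
          have := ContinuousMap.dist_apply_le_dist (f := u) (g := p) (T q)
          rw [dist_eq_norm] at this
          linarith [this, hdist.le]
      _ = ε / 2 := by simp
  have heq : (∫ q, p (T q) ∂μ) = ∫ q, p (T q) ∂μ' := integral_eq_on_A hμ hμ' h p hpA
  calc dist (∫ q, u (T q) ∂μ) (∫ q, u (T q) ∂μ')
      ≤ dist (∫ q, u (T q) ∂μ) (∫ q, p (T q) ∂μ)
        + dist (∫ q, p (T q) ∂μ') (∫ q, u (T q) ∂μ') := by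
          rw [heq]; exact dist_triangle _ _ _
    _ ≤ ε / 2 + ε / 2 := add_le_add (hkey μ) (by rw [dist_comm]; exact hkey μ')
    _ = 0 + ε := by ring

end Two2

end LFD

namespace LFD

section Two3

variable {μ μ' : Measure (ℝ × ℝ)} [IsProbabilityMeasure μ] [IsProbabilityMeasure μ']

lemma integral_real_eq (hμ : μ {q : ℝ × ℝ | 0 ≤ q.1 ∧ 0 ≤ q.2} = 1)
    (hμ' : μ' {q : ℝ × ℝ | 0 ≤ q.1 ∧ 0 ≤ q.2} = 1)
    (h : ∀ a b : ℝ, 0 ≤ a → 0 ≤ b →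
      (∫ q : ℝ × ℝ, G a b q ∂μ) = ∫ q : ℝ × ℝ, G a b q ∂μ')
    (g : C(Kset, ℝ)) :
    (∫ q, g (T q) ∂μ) = ∫ q, g (T q) ∂μ' := by
  have hc := integral_eq_all hμ hμ' h
    ⟨fun w => ((g w : ℝ) : ℂ), Complex.continuous_ofReal.comp g.continuous⟩
  simp only [ContinuousMap.coe_mk] at hc
  have e1 : ∫ q, ((g (T q) : ℝ) : ℂ) ∂μ = ((∫ q, g (T q) ∂μ : ℝ) : ℂ) := integral_ofReal
  have e2 : ∫ q, ((g (T q) : ℝ) : ℂ) ∂μ' = ((∫ q, g (T q) ∂μ' : ℝ) : ℂ) := integral_ofReal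
  rw [e1, e2] at hc
  exact_mod_cast hc

lemma map_T_eq (hμ : μ {q : ℝ × ℝ | 0 ≤ q.1 ∧ 0 ≤ q.2} = 1)
    (hμ' : μ' {q : ℝ × ℝ | 0 ≤ q.1 ∧ 0 ≤ q.2} = 1)
    (h : ∀ a b : ℝ, 0 ≤ a → 0 ≤ b →
      (∫ q : ℝ × ℝ, G a b q ∂μ) = ∫ q : ℝ × ℝ, G a b q ∂μ') :
    Measure.map T μ = Measure.map T μ' := by
  have hT : Measurable T := continuous_T.measurable
  have h1 : IsProbabilityMeasure (Measure.map T μ) :=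
    Measure.isProbabilityMeasure_map hT.aemeasurable
  have h2 : IsProbabilityMeasure (Measure.map T μ') :=
    Measure.isProbabilityMeasure_map hT.aemeasurable
  apply ext_of_forall_lintegral_eq_of_IsFiniteMeasure
  intro f
  have hfm : Measurable fun w : Kset => (f w : ℝ≥0∞) :=
    measurable_coe_nnreal_ennreal.comp f.continuous.measurable
  rw [lintegral_map hfm hT, lintegral_map hfm hT]
  have hint : Integrable (fun q => ((f (T q) : ℝ≥0) : ℝ)) μ :=
    BoundedContinuousFunction.integrable_of_nnreal μ
      (f.compContinuous ⟨T, continuous_T⟩)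
  have hint' : Integrable (fun q => ((f (T q) : ℝ≥0) : ℝ)) μ' :=
    BoundedContinuousFunction.integrable_of_nnreal μ'
      (f.compContinuous ⟨T, continuous_T⟩)
  rw [lintegral_coe_eq_integral _ hint, lintegral_coe_eq_integral _ hint']
  congr 1
  exact integral_real_eq hμ hμ' h
    ⟨fun w => ((f w : ℝ≥0) : ℝ), NNReal.continuous_coe.comp f.continuous⟩

end Two3

end LFD

end LFD

/- STATEMENT 16: the mixed Laplace–Fourier transform determines the joint law of a
pair of nonnegative random variables. -/
theorem laplace_fourier_determines (μ μ' : Measure (ℝ × ℝ))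
    [IsProbabilityMeasure μ] [IsProbabilityMeasure μ']
    (hμ : μ {q : ℝ × ℝ | 0 ≤ q.1 ∧ 0 ≤ q.2} = 1)
    (hμ' : μ' {q : ℝ × ℝ | 0 ≤ q.1 ∧ 0 ≤ q.2} = 1)
    (h : ∀ a b : ℝ, 0 ≤ a → 0 ≤ b →
      (∫ q : ℝ × ℝ,
          Complex.exp (-(((q.1 + q.2) * (a + b) : ℝ) : ℂ)
            - Complex.I * (((q.1 - q.2) * (a - b) : ℝ) : ℂ)) ∂μ)
        = ∫ q : ℝ × ℝ,
            Complex.exp (-(((q.1 + q.2) * (a + b) : ℝ) : ℂ)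
              - Complex.I * (((q.1 - q.2) * (a - b) : ℝ) : ℂ)) ∂μ') :
    μ = μ' := by
  have hG : ∀ a b : ℝ, 0 ≤ a → 0 ≤ b →
      (∫ q : ℝ × ℝ, LFD.G a b q ∂μ) = ∫ q : ℝ × ℝ, LFD.G a b q ∂μ' := h
  have hT : Measurable LFD.T := LFD.continuous_T.measurable
  have hmapT := LFD.map_T_eq hμ hμ' hG
  have hLam : MeasurableEmbedding LFD.Lam :=
    LFD.continuous_Lam.measurableEmbedding LFD.Lam_injective
  have key : ∀ (ν : Measure (ℝ × ℝ)) [IsProbabilityMeasure ν],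
      ν {q : ℝ × ℝ | 0 ≤ q.1 ∧ 0 ≤ q.2} = 1 →
      Measure.map LFD.Lam ν = Measure.map (Subtype.val) (Measure.map LFD.T ν) := by
    intro ν _ hν
    rw [Measure.map_map measurable_subtype_coe hT]
    have hae : (LFD.Lam ∘ LFD.rho) =ᵐ[ν] LFD.Lam :=
      (LFD.ae_mem_cone hν).mono fun q hq => by simp [Function.comp, hq]
    calc Measure.map LFD.Lam ν
        = Measure.map (LFD.Lam ∘ LFD.rho) ν := (Measure.map_congr hae).symm
      _ = Measure.map (Subtype.val ∘ LFD.T) ν := rfl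
  have hmapLam : Measure.map LFD.Lam μ = Measure.map LFD.Lam μ' := by
    rw [key μ hμ, key μ' hμ', hmapT]
  ext s _
  have h2 := congrArg (fun ν : Measure (ℂ × ℂ) => ν (LFD.Lam '' s)) hmapLam
  rwa [hLam.map_apply, hLam.map_apply, LFD.Lam_injective.preimage_image] at h2
end
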